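/- arXiv:1204.1573 — 4 statements merged into one kernel-verified Lean document; each statement's English description precedes it below -/
import Mathlib

section
/- For every positive integer $n$, $\sum_{k=1}^{n} \binom{n+k}{k}^2 \binom{n}{k}^2 \left[ 1 + 2k H_{n+k}^{(1)} + 2k H_{n-k}^{(1)} - 4k H_k^{(1)} \right] = 0$. -/
open Finset

/-- Generalized harmonicSum sum `H n^{(i)} = ∑_{j=1}^n 1/j^i`. -/
def harmonicSum (i n : ℕ) : ℚ := ∑ j ∈ Finset.range n, (1 : ℚ) / ((j : ℚ) + 1) ^ i

namespace StmtZeroAux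

open Polynomial

noncomputable def gp (i : ℕ) : ℚ[X] := (X - C (i:ℚ))^2
noncomputable def Np (n : ℕ) : ℚ[X] := ∏ j ∈ range n, (X + C ((j:ℚ)+1))
noncomputable def fp (n : ℕ) : ℚ[X] := X * (Np n)^2
noncomputable def wp (n i : ℕ) : ℚ[X] := ∏ j ∈ (range (n+1)).erase i, gp j

lemma gp_monic (i : ℕ) : (gp i).Monic := (monic_X_sub_C _).pow 2
lemma gp_natDegree (i : ℕ) : (gp i).natDegree = 2 := by
  rw [gp, natDegree_pow, natDegree_X_sub_C]
lemma Np_monic (n : ℕ) : (Np n).Monic :=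
  monic_prod_of_monic _ _ fun _ _ => monic_X_add_C _
lemma Np_natDegree (n : ℕ) : (Np n).natDegree = n := by
  rw [Np, natDegree_prod]
  · simp only [natDegree_X_add_C]; simp
  · intro j _; exact (monic_X_add_C _).ne_zero
lemma fp_monic (n : ℕ) : (fp n).Monic := (monic_X).mul ((Np_monic n).pow 2)
lemma fp_natDegree (n : ℕ) : (fp n).natDegree = 2*n+1 := by
  rw [fp, natDegree_mul X_ne_zero (((Np_monic n).pow 2).ne_zero), natDegree_pow, Np_natDegree]
  simp; ring

lemma prod_gp_monic (s : Finset ℕ) : (∏ j ∈ s, gp j).Monic :=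
  monic_prod_of_monic _ _ fun j _ => gp_monic j
lemma prod_gp_natDegree (s : Finset ℕ) : (∏ j ∈ s, gp j).natDegree = 2 * s.card := by
  rw [natDegree_prod _ _ (fun j _ => (gp_monic j).ne_zero)]
  rw [Finset.sum_congr rfl fun j _ => gp_natDegree j, Finset.sum_const, smul_eq_mul, mul_comm]

lemma my_derivative_prod (s : Finset ℕ) (f : ℕ → ℚ[X]) :
    derivative (∏ i ∈ s, f i) = ∑ i ∈ s, (∏ j ∈ s.erase i, f j) * derivative (f i) := by
  classical
  induction s using Finset.induction_on with
  | empty => simp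
  | @insert a s ha ih =>
      rw [Finset.prod_insert ha, derivative_mul, ih, Finset.sum_insert ha,
        Finset.erase_insert ha, Finset.mul_sum,
        mul_comm (derivative (f a)) (∏ j ∈ s, f j)]
      congr 1
      refine Finset.sum_congr rfl fun i hi => ?_
      rw [Finset.erase_insert_of_ne (by rintro rfl; exact ha hi),
        Finset.prod_insert (fun h => ha (Finset.mem_of_mem_erase h))]
      ring

lemma gp_eval_self (k : ℕ) : eval (k:ℚ) (gp k) = 0 := by simp [gp]
lemma gp_deriv_eval_self (k : ℕ) : eval (k:ℚ) (derivative (gp k)) = 0 := by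
  simp [gp, derivative_pow]

lemma eval_prod_gp_zero (s : Finset ℕ) {k : ℕ} (hk : k ∈ s) :
    eval (k:ℚ) (∏ j ∈ s, gp j) = 0 := by
  rw [eval_prod]; exact Finset.prod_eq_zero hk (gp_eval_self k)

lemma eval_deriv_prod_gp_zero (s : Finset ℕ) {k : ℕ} (hk : k ∈ s) :
    eval (k:ℚ) (derivative (∏ j ∈ s, gp j)) = 0 := by
  rw [my_derivative_prod, eval_finset_sum]
  refine Finset.sum_eq_zero fun i hi => ?_
  rw [eval_mul]
  rcases eq_or_ne i k with rfl | hik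
  · rw [gp_deriv_eval_self, mul_zero]
  · rw [eval_prod_gp_zero _ (Finset.mem_erase.2 ⟨hik.symm, hk⟩), zero_mul]

open algebraMap in
lemma decomp (n : ℕ) : ∃ r : ℕ → ℚ[X], (∀ i ∈ range (n+1), (r i).degree < 2) ∧
    fp n = ∑ i ∈ range (n+1), r i * wp n i := by
  obtain ⟨q, r, hdeg, hf⟩ := div_eq_quo_add_sum_rem_div (RatFunc ℚ) (fp n)
    (s := range (n+1)) (g := gp) (fun i _ => gp_monic i)
    (fun i _ j _ hij => (pairwise_coprime_X_sub_C (fun a b h => by exact_mod_cast h)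
        hij).pow)
  have hdeg2 : ∀ i ∈ range (n+1), (r i).degree < 2 := fun i hi =>
    (hdeg i hi).trans_le (by rw [degree_eq_natDegree (gp_monic i).ne_zero, gp_natDegree]; rfl)
  have hinj : Function.Injective (algebraMap ℚ[X] (RatFunc ℚ)) := IsFractionRing.injective _ _
  have hgne : ∀ i : ℕ, ((gp i : ℚ[X]) : RatFunc ℚ) ≠ 0 := fun i =>
    (map_ne_zero_iff _ hinj).2 (gp_monic i).ne_zero
  have hPne : (∏ i ∈ range (n+1), ((gp i : ℚ[X]) : RatFunc ℚ)) ≠ 0 :=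
    prod_ne_zero_iff.2 fun i _ => hgne i
  rw [div_eq_iff hPne] at hf
  have key : ((fp n : ℚ[X]) : RatFunc ℚ) = ((q * ∏ i ∈ range (n+1), gp i
      + ∑ i ∈ range (n+1), r i * ∏ j ∈ (range (n+1)).erase i, gp j : ℚ[X]) : RatFunc ℚ) := by
    push_cast
    rw [hf, add_mul, Finset.sum_mul]
    congr 1
    refine Finset.sum_congr rfl fun i hi => ?_
    rw [← Finset.mul_prod_erase _ _ hi, div_mul_eq_mul_div, mul_comm ((gp i : ℚ[X]) : RatFunc ℚ),
      mul_div_assoc, mul_div_cancel_right₀ _ (hgne i)]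
  have poly_eq := hinj key
  have hT : (∑ i ∈ range (n+1), r i * ∏ j ∈ (range (n+1)).erase i, gp j).degree
      < ((2*(n+1) : ℕ) : WithBot ℕ) := by
    refine (Polynomial.degree_sum_le _ _).trans_lt ?_
    rw [Finset.sup_lt_iff (by exact_mod_cast WithBot.bot_lt_coe _)]
    intro i hi
    rcases eq_or_ne (r i) 0 with h0 | h0
    · rw [h0, zero_mul, degree_zero]; exact_mod_cast WithBot.bot_lt_coe _
    have hw := prod_gp_monic ((range (n+1)).erase i)
    have hrd : (r i).natDegree ≤ 1 := by
      have h2 : (r i).natDegree < 2 := (natDegree_lt_iff_degree_lt h0).2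
        (by exact_mod_cast hdeg2 i hi)
      omega
    rw [degree_eq_natDegree (mul_ne_zero h0 hw.ne_zero), Nat.cast_lt,
      natDegree_mul h0 hw.ne_zero, prod_gp_natDegree,
      Finset.card_erase_of_mem hi, Finset.card_range]
    omega
  have hq : q = 0 := by
    by_contra hq0
    have hP : (q * ∏ i ∈ range (n+1), gp i).degree = q.degree + ((2*(n+1) : ℕ) : WithBot ℕ) := by
      rw [degree_mul, degree_eq_natDegree (prod_gp_monic _).ne_zero, prod_gp_natDegree,
        Finset.card_range]
    have hge : ((2*(n+1) : ℕ) : WithBot ℕ) ≤ (q * ∏ i ∈ range (n+1), gp i).degree := by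
      rw [hP]
      calc ((2*(n+1) : ℕ) : WithBot ℕ) = 0 + ((2*(n+1) : ℕ) : WithBot ℕ) := (zero_add _).symm
        _ ≤ q.degree + _ := add_le_add_left (zero_le_degree_iff.2 hq0) _
    have hthis : (fp n).degree = (q * ∏ i ∈ range (n+1), gp i).degree := by
      rw [poly_eq, degree_add_eq_left_of_degree_lt (hT.trans_le hge)]
    rw [degree_eq_natDegree (fp_monic n).ne_zero, fp_natDegree] at hthis
    have := hge.trans hthis.ge
    exact absurd (by exact_mod_cast this) (by omega)
  rw [hq, zero_mul, zero_add] at poly_eq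
  exact ⟨r, hdeg2, poly_eq⟩

section
variable {n : ℕ} {r : ℕ → ℚ[X]}

lemma eval_fp_eq (heq : fp n = ∑ i ∈ range (n+1), r i * wp n i)
    {k : ℕ} (hk : k ∈ range (n+1)) :
    eval (k:ℚ) (fp n) = eval (k:ℚ) (r k) * eval (k:ℚ) (wp n k) := by
  rw [heq, eval_finset_sum]
  rw [Finset.sum_eq_single_of_mem k hk (fun i hi hik => ?_), eval_mul]
  rw [eval_mul, wp, eval_prod_gp_zero _ (Finset.mem_erase.2 ⟨hik.symm, hk⟩), mul_zero]

lemma eval_dfp_eq (heq : fp n = ∑ i ∈ range (n+1), r i * wp n i) {k : ℕ}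
    (hk : k ∈ range (n+1)) (hdegk : (r k).degree ≤ 1) :
    eval (k:ℚ) (derivative (fp n)) =
      (r k).coeff 1 * eval (k:ℚ) (wp n k) + eval (k:ℚ) (r k) * eval (k:ℚ) (derivative (wp n k)) := by
  rw [heq, derivative_sum, eval_finset_sum]
  rw [Finset.sum_eq_single_of_mem k hk (fun i hi hik => ?_)]
  · rw [derivative_mul, eval_add, eval_mul, eval_mul]
    congr 2
    conv_lhs => rw [eq_X_add_C_of_degree_le_one hdegk]
    simp
  · have hkin : (k:ℕ) ∈ (range (n+1)).erase i := Finset.mem_erase.2 ⟨hik.symm, hk⟩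
    rw [derivative_mul, eval_add, eval_mul, eval_mul, wp,
      eval_prod_gp_zero _ hkin, eval_deriv_prod_gp_zero _ hkin, mul_zero, mul_zero, add_zero]

lemma sum_coeff_one (heq : fp n = ∑ i ∈ range (n+1), r i * wp n i)
    (hdeg : ∀ i ∈ range (n+1), (r i).degree ≤ 1) :
    ∑ i ∈ range (n+1), (r i).coeff 1 = 1 := by
  have h1 : (fp n).coeff (2*n+1) = 1 := by
    have := (fp_monic n).coeff_natDegree
    rwa [fp_natDegree] at this
  rw [heq, finset_sum_coeff] at h1
  rw [← h1]
  refine (Finset.sum_congr rfl fun i hi => ?_).symm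
  have hw : (wp n i).natDegree = 2*n := by
    rw [wp, prod_gp_natDegree, Finset.card_erase_of_mem hi, Finset.card_range]
    omega
  conv_lhs => rw [eq_X_add_C_of_degree_le_one (hdeg i hi)]
  rw [add_mul, coeff_add, mul_assoc, coeff_C_mul, coeff_C_mul, coeff_X_mul,
    coeff_eq_zero_of_natDegree_lt (by omega : (wp n i).natDegree < 2*n+1)]
  have h2 : (wp n i).coeff (2*n) = 1 := by
    have := (prod_gp_monic ((range (n+1)).erase i)).coeff_natDegree
    rwa [← wp, hw] at this
  rw [h2, mul_one, mul_zero, add_zero]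
end

lemma prod_range_cast_add_one (m : ℕ) : ∏ i ∈ range m, ((i:ℚ)+1) = m.factorial := by
  induction m with
  | zero => simp
  | succ m ih => rw [Finset.prod_range_succ, ih, Nat.factorial_succ]; push_cast; ring

lemma Np_eval (n k : ℕ) : eval (k:ℚ) (Np n) = ((n+k).factorial : ℚ) / (k.factorial : ℚ) := by
  have h2 : (k.factorial : ℚ) ≠ 0 := Nat.cast_ne_zero.2 (Nat.factorial_ne_zero k)
  induction n with
  | zero => simp [Np, div_self h2]
  | succ n ih =>
      rw [Np, Finset.prod_range_succ, eval_mul, ← Np, ih]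
      have h1 : ((n+1+k).factorial : ℚ) = ((n+k).factorial : ℚ) * ((n:ℚ)+k+1) := by
        have h : (n+1+k) = (n+k)+1 := by ring
        rw [h, Nat.factorial_succ]; push_cast; ring
      rw [h1]
      simp only [eval_add, eval_X, eval_C]
      field_simp
      try ring
      try simp

lemma erase_range_split {n k : ℕ} (hk : k ≤ n) :
    (range (n+1)).erase k = range k ∪ Ico (k+1) (n+1) := by
  ext x
  simp only [Finset.mem_erase, Finset.mem_range, Finset.mem_union, Finset.mem_Ico]
  omega

lemma prod_left (k : ℕ) : ∏ j ∈ range k, ((k:ℚ) - j) = (k.factorial : ℚ) := by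
  rw [← prod_range_cast_add_one k, ← Finset.prod_range_reflect (fun i => ((i:ℚ)+1)) k]
  refine Finset.prod_congr rfl fun j hj => ?_
  have hj' := Finset.mem_range.1 hj
  have h : ((k - 1 - j : ℕ) : ℚ) = (k:ℚ) - (1+j) := by
    have h2 : k - 1 - j = k - (1+j) := by omega
    rw [h2, Nat.cast_sub (by omega)]
    push_cast; ring
  rw [h]; ring

lemma prod_right (n k : ℕ) (hk : k ≤ n) :
    ∏ j ∈ Ico (k+1) (n+1), ((k:ℚ) - j) ^ 2 = (((n-k).factorial : ℚ))^2 := by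
  rw [Finset.prod_Ico_eq_prod_range]
  have h : n + 1 - (k+1) = n - k := by omega
  rw [h, ← prod_range_cast_add_one (n-k), ← Finset.prod_pow]
  refine Finset.prod_congr rfl fun i _ => ?_
  push_cast; ring

lemma wp_eval (n k : ℕ) (hk : k ≤ n) :
    eval (k:ℚ) (wp n k) = ((k.factorial : ℚ) * ((n-k).factorial : ℚ))^2 := by
  rw [wp, eval_prod, erase_range_split hk, Finset.prod_union (by
    rw [Finset.disjoint_left]; intro a ha hb
    simp only [Finset.mem_range] at ha
    simp only [Finset.mem_Ico] at hb
    omega)]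
  have hgl : ∀ j : ℕ, eval (k:ℚ) (gp j) = ((k:ℚ) - j)^2 := fun j => by simp [gp]
  rw [Finset.prod_congr rfl fun j _ => hgl j, Finset.prod_congr rfl fun j _ => hgl j,
    Finset.prod_pow, prod_left, prod_right n k hk]
  ring

lemma harm_one (m : ℕ) : harmonicSum 1 m = ∑ j ∈ range m, 1 / ((j:ℚ)+1) := by
  simp [harmonicSum]

lemma sumA (n k : ℕ) :
    ∑ j ∈ range n, 1 / ((k:ℚ) + j + 1) = harmonicSum 1 (n+k) - harmonicSum 1 k := by
  rw [harm_one, harm_one, eq_sub_iff_add_eq, add_comm (n:ℕ) k, Finset.sum_range_add, add_comm]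
  congr 1
  refine Finset.sum_congr rfl fun j _ => ?_
  push_cast; ring_nf

lemma sumB1 (k : ℕ) : ∑ j ∈ range k, 1 / ((k:ℚ) - j) = harmonicSum 1 k := by
  rw [harm_one, ← Finset.sum_range_reflect (fun i => 1 / ((i:ℚ)+1)) k]
  refine Finset.sum_congr rfl fun j hj => ?_
  have hj' := Finset.mem_range.1 hj
  have h : ((k - 1 - j : ℕ) : ℚ) = (k:ℚ) - (1+j) := by
    have h2 : k - 1 - j = k - (1+j) := by omega
    rw [h2, Nat.cast_sub (by omega)]; push_cast; ring
  rw [h]; ring_nf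

lemma sumB2 (n k : ℕ) (hk : k ≤ n) :
    ∑ j ∈ Ico (k+1) (n+1), 1 / ((k:ℚ) - j) = - harmonicSum 1 (n-k) := by
  rw [Finset.sum_Ico_eq_sum_range]
  have h : n + 1 - (k+1) = n - k := by omega
  rw [h, harm_one]
  have hc : ∀ i ∈ range (n-k), 1 / ((k:ℚ) - ((k:ℕ)+1+i : ℕ)) = -(1 / ((i:ℚ)+1)) := by
    intro i _
    have h3 : (((k:ℕ)+1+i : ℕ) : ℚ) = ((k:ℚ)+1+i : ℚ) := by push_cast; ring
    rw [h3, show (k:ℚ) - ((k:ℚ)+1+(i:ℚ)) = -((i:ℚ)+1) by ring, div_neg]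
  rw [Finset.sum_congr rfl hc, Finset.sum_neg_distrib]

lemma gp_deriv_eval (j k : ℕ) : eval (k:ℚ) (derivative (gp j)) = 2*((k:ℚ) - (j:ℚ)) := by
  simp [gp, derivative_pow]

lemma dNp_eval (n k : ℕ) :
    eval (k:ℚ) (derivative (Np n)) = eval (k:ℚ) (Np n) * ∑ j ∈ range n, 1/((k:ℚ)+j+1) := by
  rw [Np, my_derivative_prod, eval_finset_sum, ← Np, Finset.mul_sum]
  refine Finset.sum_congr rfl fun j hj => ?_
  have hNp : eval (k:ℚ) (Np n) = ((k:ℚ)+j+1) * ∏ l ∈ (range n).erase j, ((k:ℚ)+l+1) := by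
    rw [Np, eval_prod]
    have h1 : ∀ l ∈ range n, eval (k:ℚ) (X + C ((l:ℚ)+1)) = (k:ℚ)+l+1 := by
      intro l _; simp; ring
    rw [Finset.prod_congr rfl h1, ← Finset.mul_prod_erase _ _ hj]
  have hne : ((k:ℚ)+j+1) ≠ 0 := by positivity
  rw [eval_mul, eval_prod]
  have h1 : ∀ l ∈ (range n).erase j, eval (k:ℚ) (X + C ((l:ℚ)+1)) = (k:ℚ)+l+1 := by
    intro l _; simp; ring
  rw [Finset.prod_congr rfl h1, hNp]
  simp only [derivative_add, derivative_X, derivative_C, add_zero, eval_one]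
  field_simp

lemma dwp_eval (n k : ℕ) :
    eval (k:ℚ) (derivative (wp n k)) =
      eval (k:ℚ) (wp n k) * (2 * ∑ j ∈ (range (n+1)).erase k, 1/((k:ℚ) - j)) := by
  have hrhs : eval (k:ℚ) (wp n k) * (2 * ∑ j ∈ (range (n+1)).erase k, 1/((k:ℚ) - j))
      = ∑ j ∈ (range (n+1)).erase k, eval (k:ℚ) (wp n k) * (2 * (1/((k:ℚ) - j))) := by
    rw [Finset.mul_sum, Finset.mul_sum]
  conv_lhs => rw [wp, my_derivative_prod]
  rw [eval_finset_sum, hrhs]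
  refine Finset.sum_congr rfl fun j hj => ?_
  have hjk : j ≠ k := (Finset.mem_erase.1 hj).1
  have hne : (k:ℚ) - j ≠ 0 := by
    have h4 : (j:ℚ) ≠ (k:ℚ) := by exact_mod_cast hjk
    intro h; apply h4; linarith
  have hW : eval (k:ℚ) (wp n k) = ((k:ℚ)-j)^2 * ∏ l ∈ ((range (n+1)).erase k).erase j, ((k:ℚ)-l)^2 := by
    rw [wp, eval_prod]
    have h1 : ∀ l ∈ (range (n+1)).erase k, eval (k:ℚ) (gp l) = ((k:ℚ)-l)^2 := by
      intro l _; simp [gp]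
    rw [Finset.prod_congr rfl h1, ← Finset.mul_prod_erase _ _ hj]
  rw [eval_mul, eval_prod, gp_deriv_eval]
  have h1 : ∀ l ∈ ((range (n+1)).erase k).erase j, eval (k:ℚ) (gp l) = ((k:ℚ)-l)^2 := by
    intro l _; simp [gp]
  rw [Finset.prod_congr rfl h1, hW]
  field_simp

lemma dfp_eval (n k : ℕ) :
    eval (k:ℚ) (derivative (fp n)) =
      eval (k:ℚ) (Np n)^2 + (k:ℚ) * (2 * eval (k:ℚ) (Np n) * eval (k:ℚ) (derivative (Np n))) := by
  rw [fp, derivative_mul, derivative_X, derivative_pow]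
  simp

end StmtZeroAux

open StmtZeroAux Polynomial in
theorem stmt_0 (n : ℕ) (hn : 0 < n) :
    ∑ k ∈ Finset.Icc 1 n,
      (((n + k).choose k : ℚ)) ^ 2 * ((n.choose k : ℚ)) ^ 2 *
        (1 + 2 * k * harmonicSum 1 (n + k) + 2 * k * harmonicSum 1 (n - k)
          - 4 * k * harmonicSum 1 k) = 0 := by
  obtain ⟨r, hdeg, heq⟩ := decomp n
  have hdeg1 : ∀ i ∈ range (n+1), (r i).degree ≤ 1 := by
    intro i hi
    rcases eq_or_ne (r i) 0 with h0 | h0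
    · rw [h0, degree_zero]; exact bot_le
    · have h2 : (r i).natDegree < 2 := (natDegree_lt_iff_degree_lt h0).2
        (by exact_mod_cast hdeg i hi)
      have h3 : (r i).natDegree ≤ 1 := by omega
      exact natDegree_le_iff_degree_le.1 h3
  -- main computation of the coefficients
  have key : ∀ k ∈ range (n+1), (r k).coeff 1 =
      (((n + k).choose k : ℚ)) ^ 2 * ((n.choose k : ℚ)) ^ 2 *
        (1 + 2 * k * harmonicSum 1 (n + k) + 2 * k * harmonicSum 1 (n - k)
          - 4 * k * harmonicSum 1 k) := by
    intro k hk
    have hkn : k ≤ n := by simpa [Nat.lt_succ_iff] using Finset.mem_range.1 hk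
    set W : ℚ := eval (k:ℚ) (wp n k) with hWdef
    set Nk : ℚ := eval (k:ℚ) (Np n) with hNdef
    have hWval : W = ((k.factorial : ℚ) * ((n-k).factorial : ℚ))^2 := wp_eval n k hkn
    have hWne : W ≠ 0 := by
      rw [hWval]
      positivity
    have hfne : (k.factorial : ℚ) ≠ 0 := Nat.cast_ne_zero.2 (Nat.factorial_ne_zero k)
    have hfne2 : ((n-k).factorial : ℚ) ≠ 0 := Nat.cast_ne_zero.2 (Nat.factorial_ne_zero _)
    -- value equation
    have e1 : (k:ℚ) * Nk^2 = eval (k:ℚ) (r k) * W := by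
      rw [← eval_fp_eq heq hk, fp]
      simp
      exact Or.inl rfl
    -- derivative equation
    have e2 : Nk^2 + (k:ℚ) * (2 * Nk * (Nk * ∑ j ∈ range n, 1/((k:ℚ)+j+1)))
        = (r k).coeff 1 * W + eval (k:ℚ) (r k) * (W * (2 * ∑ j ∈ (range (n+1)).erase k, 1/((k:ℚ) - j))) := by
      rw [← dwp_eval, ← eval_dfp_eq heq hk (hdeg1 k hk), dfp_eval, dNp_eval]
    set A : ℚ := ∑ j ∈ range n, 1/((k:ℚ)+j+1) with hA
    set B : ℚ := ∑ j ∈ (range (n+1)).erase k, 1/((k:ℚ) - j) with hB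
    have hAval : A = harmonicSum 1 (n+k) - harmonicSum 1 k := sumA n k
    have hBval : B = harmonicSum 1 k - harmonicSum 1 (n-k) := by
      rw [hB, erase_range_split hkn, Finset.sum_union (by
        rw [Finset.disjoint_left]; intro a ha hb
        simp only [Finset.mem_range] at ha
        simp only [Finset.mem_Ico] at hb
        omega), sumB1, sumB2 n k hkn]
      ring
    -- express Nk^2 via binomials and W
    have hNk : Nk = ((n+k).factorial : ℚ) / (k.factorial : ℚ) := Np_eval n k
    have hbinom : ((n+k).choose k : ℚ) * (n.choose k : ℚ) * ((k.factorial : ℚ) * ((n-k).factorial : ℚ)) * (k.factorial : ℚ) = ((n+k).factorial : ℚ) := by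
      have h1 : (n.choose k) * k.factorial * (n-k).factorial = n.factorial :=
        Nat.choose_mul_factorial_mul_factorial hkn
      have h2 : ((n+k).choose k) * k.factorial * n.factorial = (n+k).factorial := by
        have h4 := Nat.choose_mul_factorial_mul_factorial (Nat.le_add_left k n)
        have h3 : n + k - k = n := by omega
        rwa [h3] at h4
      have hq1 : ((n.choose k : ℚ)) * (k.factorial : ℚ) * ((n-k).factorial : ℚ) = (n.factorial : ℚ) := by
        exact_mod_cast congrArg (Nat.cast (R := ℚ)) h1
      have hq2 : (((n+k).choose k : ℚ)) * (k.factorial : ℚ) * (n.factorial : ℚ) = ((n+k).factorial : ℚ) := by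
        exact_mod_cast congrArg (Nat.cast (R := ℚ)) h2
      linear_combination (((n+k).choose k : ℚ) * (k.factorial : ℚ)) * hq1 + hq2
    have hbase : Nk = ((n+k).choose k : ℚ) * (n.choose k : ℚ) * ((k.factorial : ℚ) * ((n-k).factorial : ℚ)) := by
      rw [hNk, eq_comm, eq_div_iff hfne]
      linear_combination hbinom
    have hNW : Nk^2 = (((n+k).choose k : ℚ))^2 * ((n.choose k : ℚ))^2 * W := by
      rw [hbase, hWval]
      ring
    -- solve for the coefficient
    have e3 : (r k).coeff 1 * W = Nk^2 * (1 + 2*(k:ℚ)*A - 2*(k:ℚ)*B) := by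
      linear_combination -e2 + 2*B*e1
    have e4 : (r k).coeff 1 * W =
        ((((n + k).choose k : ℚ)) ^ 2 * ((n.choose k : ℚ)) ^ 2 *
          (1 + 2 * k * harmonicSum 1 (n + k) + 2 * k * harmonicSum 1 (n - k)
            - 4 * k * harmonicSum 1 k)) * W := by
      rw [e3, hNW, hAval, hBval]; ring
    exact mul_right_cancel₀ hWne e4
  have hsum := sum_coeff_one heq hdeg1
  rw [Finset.sum_congr rfl key] at hsum
  have hsplit : range (n+1) = insert 0 (Finset.Icc 1 n) := by
    ext x
    simp only [Finset.mem_range, Finset.mem_insert, Finset.mem_Icc]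
    omega
  rw [hsplit, Finset.sum_insert (by simp)] at hsum
  have h0 : (((n + 0).choose 0 : ℚ)) ^ 2 * ((n.choose 0 : ℚ)) ^ 2 *
      (1 + 2 * (0:ℕ) * harmonicSum 1 (n + 0) + 2 * (0:ℕ) * harmonicSum 1 (n - 0)
        - 4 * (0:ℕ) * harmonicSum 1 0) = 1 := by
    simp
  rw [h0] at hsum
  linarith
end

section
/- Let $m, n$ be positive integers with $m \geq n$. Then $\sum_{k=0}^{n} \binom{m+k}{k}\binom{m}{k}\binom{n+k}{k}\binom{n}{k} \left[ 1 + k\left(H_{m+k}^{(1)} + H_{m-k}^{(1)} + H_{n+k}^{(1)} + H_{n-k}^{(1)} - 4H_k^{(1)}\right) \right] + \sum_{k=n+1}^{m} (-1)^{k-n} \binom{m+k}{k}\binom{m}{k}\binom{n+k}{k} / \binom{k-1}{n} = (-1)^{m+n}$. -/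
open Finset

open Polynomial Nat


lemma fact_ne (N : ℕ) : ((N ! : ℚ)) ≠ 0 := by
  exact_mod_cast N.factorial_ne_zero

lemma prod_Ioc0 (N : ℕ) : ∏ j ∈ Ioc 0 N, (j : ℚ) = (N ! : ℚ) := by
  induction N with
  | zero => simp
  | succ n ih =>
    rw [← Finset.prod_Ioc_consecutive (fun i => (i : ℚ)) (Nat.zero_le n) (Nat.le_succ n)]
    have : Ioc n (n+1) = {n+1} := by ext x; simp [Nat.lt_succ_iff]
    rw [this]
    simp only [Finset.prod_singleton] at *
    rw [ih]
    push_cast [Nat.factorial_succ]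
    ring

lemma prod_Ioc_cast (a b : ℕ) (h : a ≤ b) : ∏ j ∈ Ioc a b, (j : ℚ) = (b ! : ℚ) / (a ! : ℚ) := by
  rw [eq_div_iff (fact_ne a)]
  have := Finset.prod_Ioc_consecutive (fun i => (i : ℚ)) (Nat.zero_le a) h
  rw [mul_comm, ← prod_Ioc0 a, ← prod_Ioc0 b]
  exact this

lemma Ioc_shift (k N : ℕ) : Ioc k (k + N) = Finset.map (addLeftEmbedding k) (Ioc 0 N) := by
  rw [Finset.map_add_left_Ioc]; norm_num

lemma prod_add_eq (k N : ℕ) : ∏ j ∈ Ioc 0 N, ((k : ℚ) + j) = ((k + N)! : ℚ) / (k ! : ℚ) := by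
  rw [← prod_Ioc_cast k (k + N) (Nat.le_add_right k N), Ioc_shift]
  rw [Finset.prod_map]
  simp [addLeftEmbedding_apply]

lemma prod_sub_eq (k N : ℕ) (h : N < k) :
    ∏ j ∈ Ioc 0 N, ((k : ℚ) - j) = ((k - 1)! : ℚ) / ((k - 1 - N)! : ℚ) := by
  rw [← prod_Ioc_cast (k - 1 - N) (k - 1) (by omega)]
  refine Finset.prod_nbij' (fun j => k - j) (fun i => k - i) ?_ ?_ ?_ ?_ ?_
  · intro a ha; simp at ha ⊢; omega
  · intro a ha; simp at ha ⊢; omega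
  · intro a ha; simp at ha; show k - (k - a) = a; omega
  · intro a ha; simp at ha; show k - (k - a) = a; omega
  · intro a ha; simp at ha
    have : a ≤ k := by omega
    push_cast [Nat.cast_sub this]
    ring

lemma prod_sub_shift (k N : ℕ) (h : k ≤ N) :
    ∏ j ∈ Ioc k N, ((k : ℚ) - j) = (-1) ^ (N - k) * ((N - k)! : ℚ) := by
  have : Ioc k N = Ioc k (k + (N - k)) := by congr 1; omega
  rw [this, Ioc_shift, Finset.prod_map]
  simp only [addLeftEmbedding_apply]
  have step : ∏ j ∈ Ioc 0 (N - k), ((k:ℚ) - ((k + j : ℕ) : ℚ)) = ∏ j ∈ Ioc 0 (N - k), ((-1) * j : ℚ) :=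
    Finset.prod_congr rfl (fun j _ => by push_cast; ring)
  rw [step, Finset.prod_mul_distrib, Finset.prod_const, prod_Ioc0, Nat.card_Ioc, Nat.sub_zero]

lemma erase_split (k N : ℕ) (h1 : 1 ≤ k) (h2 : k ≤ N) :
    (Ioc 0 N).erase k = Ioc 0 (k - 1) ∪ Ioc k N := by
  ext x; simp; omega

lemma prod_sub_erase (k N : ℕ) (h1 : 1 ≤ k) (h2 : k ≤ N) :
    ∏ j ∈ (Ioc 0 N).erase k, ((k : ℚ) - j) =
      (-1) ^ (N - k) * ((k - 1)! : ℚ) * ((N - k)! : ℚ) := by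
  rw [erase_split k N h1 h2, Finset.prod_union (by rw [Finset.disjoint_left]; intro a ha hb; simp at ha hb; omega)]
  rw [prod_sub_eq k (k-1) (by omega), prod_sub_shift k N h2]
  simp [Nat.sub_self]
  ring
lemma harm0 (N : ℕ) : harmonicSum 1 N = ∑ j ∈ Ioc 0 N, 1 / (j : ℚ) := by
  unfold harmonicSum
  refine Finset.sum_nbij' (fun j => j + 1) (fun j => j - 1) ?_ ?_ ?_ ?_ ?_
  · intro a ha; simp at ha ⊢; omega
  · intro a ha; simp at ha ⊢; show a - 1 < N; omega
  · intro a ha; show a + 1 - 1 = a; omega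
  · intro a ha; simp at ha; show a - 1 + 1 = a; omega
  · intro a ha; push_cast; ring_nf

lemma harm_Ioc_cast (a b : ℕ) (h : a ≤ b) :
    ∑ j ∈ Ioc a b, 1 / (j : ℚ) = harmonicSum 1 b - harmonicSum 1 a := by
  rw [harm0, harm0, eq_sub_iff_add_eq, add_comm]
  exact Finset.sum_Ioc_consecutive (fun i => 1 / (i : ℚ)) (Nat.zero_le a) h

lemma harm_add_eq (k N : ℕ) :
    ∑ j ∈ Ioc 0 N, 1 / ((k : ℚ) + j) = harmonicSum 1 (k + N) - harmonicSum 1 k := by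
  rw [← harm_Ioc_cast k (k + N) (Nat.le_add_right k N), Ioc_shift, Finset.sum_map]
  simp [addLeftEmbedding_apply]

lemma harm_sub_eq (k N : ℕ) (h : N < k) :
    ∑ j ∈ Ioc 0 N, 1 / ((k : ℚ) - j) = harmonicSum 1 (k - 1) - harmonicSum 1 (k - 1 - N) := by
  rw [← harm_Ioc_cast (k - 1 - N) (k - 1) (by omega)]
  refine Finset.sum_nbij' (fun j => k - j) (fun i => k - i) ?_ ?_ ?_ ?_ ?_
  · intro a ha; simp at ha ⊢; omega
  · intro a ha; simp at ha ⊢; omega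
  · intro a ha; simp at ha; show k - (k - a) = a; omega
  · intro a ha; simp at ha; show k - (k - a) = a; omega
  · intro a ha; simp at ha
    have : a ≤ k := by omega
    rw [Nat.cast_sub this]

lemma harm_sub_shift (k N : ℕ) (h : k ≤ N) :
    ∑ j ∈ Ioc k N, 1 / ((k : ℚ) - j) = -harmonicSum 1 (N - k) := by
  have : Ioc k N = Ioc k (k + (N - k)) := by congr 1; omega
  rw [this, Ioc_shift, Finset.sum_map]
  simp only [addLeftEmbedding_apply]
  have step : ∑ j ∈ Ioc 0 (N - k), 1 / ((k:ℚ) - ((k + j : ℕ) : ℚ))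
      = ∑ j ∈ Ioc 0 (N - k), (-1) * (1 / (j : ℚ)) :=
    Finset.sum_congr rfl (fun j _ => by
      push_cast
      by_cases hj : (j:ℚ) = 0
      · simp [hj]
      · rw [show (k:ℚ) - (k + j) = -(j:ℚ) by ring, one_div_neg_eq_neg_one_div]; ring)
  rw [step, ← Finset.mul_sum, ← harm0]
  ring

lemma harm_sub_erase (k N : ℕ) (h1 : 1 ≤ k) (h2 : k ≤ N) :
    ∑ j ∈ (Ioc 0 N).erase k, 1 / ((k : ℚ) - j) =
      harmonicSum 1 (k - 1) - harmonicSum 1 (N - k) := by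
  rw [erase_split k N h1 h2, Finset.sum_union (by rw [Finset.disjoint_left]; intro a ha hb; simp at ha hb; omega)]
  rw [harm_sub_eq k (k-1) (by omega), harm_sub_shift k N h2]
  simp [Nat.sub_self]
  unfold harmonicSum; simp; ring
lemma finset_derivative_prod {ι : Type*} [DecidableEq ι] (s : Finset ι) (f : ι → ℚ[X]) :
    derivative (∏ i ∈ s, f i) = ∑ i ∈ s, (∏ j ∈ s.erase i, f j) * derivative (f i) := by
  classical
  induction s using Finset.induction_on with
  | empty => simp
  | insert _ _ ha ih =>
    rename_i a s'
    rw [Finset.prod_insert ha, derivative_mul, ih, Finset.sum_insert ha]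
    rw [Finset.erase_insert ha, Finset.mul_sum]
    congr 1
    · ring
    · refine Finset.sum_congr rfl ?_
      intro i hi
      rw [Finset.erase_insert_of_ne (by rintro rfl; exact ha hi)]
      rw [Finset.prod_insert (fun h => ha (Finset.mem_of_mem_erase h))]
      ring

lemma eval_prod_linear (s : Finset ℕ) (v : ℕ → ℚ) (x : ℚ) :
    eval x (∏ j ∈ s, (X - C (v j))) = ∏ j ∈ s, (x - v j) := by
  simp [eval_prod]

lemma eval_deriv_prod_linear (s : Finset ℕ) (v : ℕ → ℚ) (x : ℚ)
    (hx : ∀ j ∈ s, x - v j ≠ 0) :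
    eval x (derivative (∏ j ∈ s, (X - C (v j)))) =
      (∏ j ∈ s, (x - v j)) * ∑ j ∈ s, 1 / (x - v j) := by
  rw [finset_derivative_prod]
  simp only [derivative_sub, derivative_X, derivative_C, sub_zero, mul_one, eval_finset_sum]
  rw [Finset.mul_sum]
  refine Finset.sum_congr rfl ?_
  intro j hj
  rw [eval_prod]
  simp only [eval_sub, eval_X, eval_C]
  rw [← Finset.prod_erase_mul s _ hj]
  field_simp [hx j hj]

lemma eval_deriv_prod_root (s : Finset ℕ) (v : ℕ → ℚ) (x : ℚ) (k : ℕ) (hk : k ∈ s)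
    (hx : x - v k = 0) :
    eval x (derivative (∏ j ∈ s, (X - C (v j)))) = ∏ i ∈ s.erase k, (x - v i) := by
  rw [finset_derivative_prod]
  simp only [derivative_sub, derivative_X, derivative_C, sub_zero, mul_one, eval_finset_sum]
  rw [Finset.sum_eq_single k]
  · rw [eval_prod]; simp
  · intro j hj hjk
    rw [eval_prod]
    simp only [eval_sub, eval_X, eval_C]
    exact Finset.prod_eq_zero (Finset.mem_erase.mpr ⟨Ne.symm hjk, hk⟩) hx
  · intro h; exact absurd hk h

lemma monic_prod_linear (s : Finset ℕ) (v : ℕ → ℚ) :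
    (∏ j ∈ s, (X - C (v j))).Monic :=
  monic_prod_of_monic s _ (fun j _ => monic_X_sub_C (v j))

lemma natDegree_prod_linear (s : Finset ℕ) (v : ℕ → ℚ) :
    (∏ j ∈ s, (X - C (v j))).natDegree = s.card := by
  rw [Polynomial.natDegree_prod]
  · simp [natDegree_X_sub_C]
  · intro j _; exact (monic_X_sub_C (v j)).ne_zero

lemma sq_dvd_of_root_deriv (p : ℚ[X]) (x : ℚ) (h1 : eval x p = 0)
    (h2 : eval x (derivative p) = 0) : (X - C x) ^ 2 ∣ p := by
  obtain ⟨q, hq⟩ := (dvd_iff_isRoot.mpr h1)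
  have hq' : eval x q = 0 := by
    have := congrArg derivative hq
    rw [derivative_mul] at this
    have h3 := congrArg (eval x) this
    simp [h2, h1, eval_mul] at h3
    linarith [h3]

  obtain ⟨r, hr⟩ := (dvd_iff_isRoot.mpr hq')
  exact ⟨r, by rw [hq, hr]; ring⟩
noncomputable section
def cpos : ℕ → ℚ := fun j => (j : ℚ)
def cneg : ℕ → ℚ := fun j => -(j : ℚ)
def PL (s : Finset ℕ) (v : ℕ → ℚ) : ℚ[X] := ∏ j ∈ s, (X - C (v j))

def Np (m n : ℕ) : ℚ[X] := PL (Ioc 0 m) cneg * PL (Ioc 0 n) cneg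
def P0 (m n : ℕ) : ℚ[X] := PL (Ioc 0 m) cpos * PL (Ioc 0 n) cpos
def Qp (m n k : ℕ) : ℚ[X] := X * PL ((Ioc 0 m).erase k) cpos * PL ((Ioc 0 n).erase k) cpos
def Rp (m n k : ℕ) : ℚ[X] := X * PL ((Ioc 0 m).erase k) cpos * PL (Ioc 0 n) cpos

def hh (m n k : ℕ) : ℚ := harmonicSum 1 (m + k) + harmonicSum 1 (m - k) + harmonicSum 1 (n + k)
          + harmonicSum 1 (n - k) - 4 * harmonicSum 1 k
def tq (m n k : ℕ) : ℚ :=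
  ((m + k).choose k : ℚ) * (m.choose k : ℚ) * ((n + k).choose k : ℚ) * (n.choose k : ℚ)
def u1 (m n k : ℕ) : ℚ := tq m n k * (1 + (k : ℚ) * hh m n k)
def u2 (m n k : ℕ) : ℚ :=
  (-1 : ℚ) ^ (k - n) * ((m + k).choose k : ℚ) * (m.choose k : ℚ) * ((n + k).choose k : ℚ)
    / ((k - 1).choose n : ℚ)
def aq (m n k : ℕ) : ℚ := (-1 : ℚ) ^ (m + n) * k * tq m n k
def b1 (m n k : ℕ) : ℚ := (-1 : ℚ) ^ (m + n) * u1 m n k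
def b2 (m n k : ℕ) : ℚ := (-1 : ℚ) ^ (m + n) * u2 m n k

def Ep (m n : ℕ) : ℚ[X] := Np m n - C ((-1 : ℚ) ^ (m + n)) * P0 m n
  - (∑ k ∈ Ioc 0 n, (C (aq m n k) * Qp m n k + C (b1 m n k) * Rp m n k))
  - ∑ k ∈ Ioc n m, C (b2 m n k) * Rp m n k

-- value wrappers
lemma val_PL_neg (k N : ℕ) :
    eval (k : ℚ) (PL (Ioc 0 N) cneg) = ((N + k)! : ℚ) / (k ! : ℚ) := by
  rw [PL, eval_prod_linear]
  have : ∀ j : ℕ, (k : ℚ) - cneg j = (k : ℚ) + j := fun j => by simp [cneg]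
  rw [Finset.prod_congr rfl (fun j _ => this j), prod_add_eq, Nat.add_comm k N]

lemma val_PL_pos_erase (k N : ℕ) (h1 : 1 ≤ k) (h2 : k ≤ N) :
    eval (k : ℚ) (PL ((Ioc 0 N).erase k) cpos) =
      (-1) ^ (N - k) * ((k - 1)! : ℚ) * ((N - k)! : ℚ) := by
  rw [PL, eval_prod_linear]
  exact prod_sub_erase k N h1 h2

lemma val_PL_pos_big (k N : ℕ) (h : N < k) :
    eval (k : ℚ) (PL (Ioc 0 N) cpos) = ((k - 1)! : ℚ) / ((k - 1 - N)! : ℚ) := by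
  rw [PL, eval_prod_linear]
  exact prod_sub_eq k N h

lemma val_PL_pos_zero (k N : ℕ) (h1 : 1 ≤ k) (h2 : k ≤ N) :
    eval (k : ℚ) (PL (Ioc 0 N) cpos) = 0 := by
  rw [PL, eval_prod_linear]
  exact Finset.prod_eq_zero (Finset.mem_Ioc.mpr ⟨h1, h2⟩) (by simp [cpos])

lemma val_Np (m n k : ℕ) :
    eval (k : ℚ) (Np m n) = (((m + k)! : ℚ) / (k ! : ℚ)) * (((n + k)! : ℚ) / (k ! : ℚ)) := by
  rw [Np, eval_mul, val_PL_neg, val_PL_neg]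

lemma val_Qp (m n k : ℕ) (h1 : 1 ≤ k) (h2 : k ≤ n) (hmn : n ≤ m) :
    eval (k : ℚ) (Qp m n k) = (k : ℚ) * ((-1) ^ (m - k) * ((k - 1)! : ℚ) * ((m - k)! : ℚ))
      * ((-1) ^ (n - k) * ((k - 1)! : ℚ) * ((n - k)! : ℚ)) := by
  rw [Qp, eval_mul, eval_mul, eval_X, val_PL_pos_erase k m h1 (h2.trans hmn),
    val_PL_pos_erase k n h1 h2]

lemma val_Rp_self (m n k : ℕ) (h1 : n < k) (h2 : k ≤ m) :
    eval (k : ℚ) (Rp m n k) = (k : ℚ) * ((-1) ^ (m - k) * ((k - 1)! : ℚ) * ((m - k)! : ℚ))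
      * (((k - 1)! : ℚ) / ((k - 1 - n)! : ℚ)) := by
  rw [Rp, eval_mul, eval_mul, eval_X, val_PL_pos_erase k m (by omega) h2,
    val_PL_pos_big k n h1]
lemma choose_cast_add (a k : ℕ) :
    ((a + k).choose k : ℚ) = ((a + k)! : ℚ) / ((k ! : ℚ) * (a ! : ℚ)) := by
  rw [Nat.cast_choose ℚ (Nat.le_add_left k a), Nat.add_sub_cancel]

lemma choose_cast (a k : ℕ) (h : k ≤ a) :
    (a.choose k : ℚ) = (a ! : ℚ) / ((k ! : ℚ) * ((a - k)! : ℚ)) := by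
  rw [Nat.cast_choose ℚ h]

lemma kfact_split (k : ℕ) (h : 1 ≤ k) : ((k)! : ℚ) = (k : ℚ) * ((k - 1)! : ℚ) := by
  have := Nat.mul_factorial_pred (show k ≠ 0 by omega)
  exact_mod_cast this.symm

lemma cast_k_ne (k : ℕ) (h : 1 ≤ k) : (k : ℚ) ≠ 0 := by
  have : 0 < k := h
  exact_mod_cast this.ne'

lemma keyA (m n k : ℕ) (h1 : 1 ≤ k) (h2 : k ≤ n) (hmn : n ≤ m) :
    eval (k : ℚ) (Np m n) = aq m n k * eval (k : ℚ) (Qp m n k) := by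
  rw [val_Np, val_Qp m n k h1 h2 hmn, aq, tq]
  have hs : (-1 : ℚ) ^ (m + n) * ((-1 : ℚ) ^ (m - k) * (-1 : ℚ) ^ (n - k)) = 1 := by
    rw [← pow_add, ← pow_add]
    exact Even.neg_one_pow ⟨m + n - k, by omega⟩
  calc (((m + k)! : ℚ) / (k ! : ℚ)) * (((n + k)! : ℚ) / (k ! : ℚ))
      = ((-1 : ℚ) ^ (m + n) * ((-1 : ℚ) ^ (m - k) * (-1 : ℚ) ^ (n - k))) *
        ((((m + k)! : ℚ) / (k ! : ℚ)) * (((n + k)! : ℚ) / (k ! : ℚ))) := by rw [hs]; ring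
    _ = _ := by
        rw [choose_cast_add m k, choose_cast_add n k, choose_cast m k (h2.trans hmn),
          choose_cast n k h2, kfact_split k h1]
        field_simp

lemma keyB (m n k : ℕ) (h1 : n < k) (h2 : k ≤ m) :
    eval (k : ℚ) (Np m n) = b2 m n k * eval (k : ℚ) (Rp m n k) := by
  rw [val_Np, val_Rp_self m n k h1 h2, b2, u2]
  have hs : (-1 : ℚ) ^ (m + n) * ((-1 : ℚ) ^ (k - n) * (-1 : ℚ) ^ (m - k)) = 1 := by
    rw [← pow_add, ← pow_add]
    exact Even.neg_one_pow ⟨m, by omega⟩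
  have hch : ((k - 1).choose n : ℚ) ≠ 0 := by
    have : 0 < (k - 1).choose n := Nat.choose_pos (by omega)
    exact_mod_cast this.ne'
  calc (((m + k)! : ℚ) / (k ! : ℚ)) * (((n + k)! : ℚ) / (k ! : ℚ))
      = ((-1 : ℚ) ^ (m + n) * ((-1 : ℚ) ^ (k - n) * (-1 : ℚ) ^ (m - k))) *
        ((((m + k)! : ℚ) / (k ! : ℚ)) * (((n + k)! : ℚ) / (k ! : ℚ))) := by rw [hs]; ring
    _ = _ := by
        rw [choose_cast_add m k, choose_cast_add n k, choose_cast m k h2,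
          choose_cast (k - 1) n (by omega), kfact_split k (by omega)]
        have hk0 : (k : ℚ) ≠ 0 := cast_k_ne k (by omega)
        field_simp [fact_ne]
lemma cast_sub_ne (k j : ℕ) (h : j ≠ k) : (k : ℚ) - (j : ℚ) ≠ 0 := by
  intro hc
  have : (j : ℚ) = (k : ℚ) := by linarith
  exact h (by exact_mod_cast this)

lemma dval_PL_neg (k N : ℕ) :
    eval (k : ℚ) (derivative (PL (Ioc 0 N) cneg)) =
      eval (k : ℚ) (PL (Ioc 0 N) cneg) * (harmonicSum 1 (N + k) - harmonicSum 1 k) := by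
  rw [PL, eval_deriv_prod_linear _ _ _ (fun j hj => by
    simp only [cneg, sub_neg_eq_add]
    have : 0 < j := (Finset.mem_Ioc.mp hj).1
    positivity), eval_prod_linear]
  congr 1
  have : ∀ j ∈ Ioc 0 N, 1 / ((k : ℚ) - cneg j) = 1 / ((k : ℚ) + j) := fun j _ => by
    simp [cneg]
  rw [Finset.sum_congr rfl this, harm_add_eq, Nat.add_comm k N]

lemma dval_PL_pos_erase (k N : ℕ) (h1 : 1 ≤ k) (h2 : k ≤ N) :
    eval (k : ℚ) (derivative (PL ((Ioc 0 N).erase k) cpos)) =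
      eval (k : ℚ) (PL ((Ioc 0 N).erase k) cpos) *
        (harmonicSum 1 (k - 1) - harmonicSum 1 (N - k)) := by
  rw [PL, eval_deriv_prod_linear _ _ _ (fun j hj => by
    have : j ≠ k := (Finset.mem_erase.mp hj).1
    exact cast_sub_ne k j this), eval_prod_linear]
  congr 1
  exact harm_sub_erase k N h1 h2

lemma dval_PL_pos_root (k N : ℕ) (h1 : 1 ≤ k) (h2 : k ≤ N) :
    eval (k : ℚ) (derivative (PL (Ioc 0 N) cpos)) =
      eval (k : ℚ) (PL ((Ioc 0 N).erase k) cpos) := by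
  rw [PL, eval_deriv_prod_root _ _ _ k (Finset.mem_Ioc.mpr ⟨h1, h2⟩) (by simp [cpos]),
    PL, eval_prod_linear]

lemma dval_Np (m n k : ℕ) :
    eval (k : ℚ) (derivative (Np m n)) = eval (k : ℚ) (Np m n) *
      ((harmonicSum 1 (m + k) - harmonicSum 1 k) +
       (harmonicSum 1 (n + k) - harmonicSum 1 k)) := by
  rw [Np, derivative_mul, eval_add, eval_mul, eval_mul, dval_PL_neg, dval_PL_neg, eval_mul]
  ring

lemma dval_Qp (m n k : ℕ) (h1 : 1 ≤ k) (h2 : k ≤ n) (hmn : n ≤ m) :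
    eval (k : ℚ) (derivative (Qp m n k)) = eval (k : ℚ) (Qp m n k) *
      (1 / (k : ℚ) + (harmonicSum 1 (k - 1) - harmonicSum 1 (m - k))
        + (harmonicSum 1 (k - 1) - harmonicSum 1 (n - k))) := by
  have hk0 : (k : ℚ) ≠ 0 := cast_k_ne k h1
  rw [Qp, derivative_mul, derivative_mul, derivative_X, eval_add, eval_mul, eval_add,
    eval_mul, eval_mul, eval_mul, eval_one, eval_X,
    dval_PL_pos_erase k m h1 (h2.trans hmn), dval_PL_pos_erase k n h1 h2, eval_mul, eval_mul,
    eval_X]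
  field_simp
  simp only [eval_mul, eval_X]
  ring

lemma dval_Rp (m n k : ℕ) (h1 : 1 ≤ k) (h2 : k ≤ n) :
    eval (k : ℚ) (derivative (Rp m n k)) = eval (k : ℚ) (Qp m n k) := by
  rw [Rp, derivative_mul, eval_add, eval_mul, eval_mul,
    val_PL_pos_zero k n h1 h2, dval_PL_pos_root k n h1 h2, Qp]
  simp only [eval_mul, eval_X]
  ring

lemma harm_pred (k : ℕ) (h : 1 ≤ k) :
    harmonicSum 1 (k - 1) = harmonicSum 1 k - 1 / (k : ℚ) := by
  have hk : k = (k - 1) + 1 := by omega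
  have h2 : harmonicSum 1 ((k - 1) + 1) =
      harmonicSum 1 (k - 1) + 1 / (((k - 1 : ℕ) : ℚ) + 1) := by
    unfold harmonicSum
    rw [Finset.sum_range_succ]
    norm_num
  rw [← hk] at h2
  have h3 : (((k - 1 : ℕ) : ℚ) + 1) = (k : ℚ) := by
    push_cast [Nat.cast_sub h]
    ring
  rw [h3] at h2
  rw [h2]; ring

lemma keyH (m n k : ℕ) (h1 : 1 ≤ k) (h2 : k ≤ n) (hmn : n ≤ m) :
    b1 m n k = aq m n k *
      (((harmonicSum 1 (m + k) - harmonicSum 1 k) + (harmonicSum 1 (n + k) - harmonicSum 1 k))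
       - (1 / (k : ℚ) + (harmonicSum 1 (k - 1) - harmonicSum 1 (m - k))
        + (harmonicSum 1 (k - 1) - harmonicSum 1 (n - k)))) := by
  rw [b1, aq, u1, hh, harm_pred k h1]
  have hk0 : (k : ℚ) ≠ 0 := cast_k_ne k h1
  field_simp
  ring
lemma dvd_PL (k : ℕ) (s : Finset ℕ) (hk : k ∈ s) : (X - C (k : ℚ)) ∣ PL s cpos := by
  have : X - C (k : ℚ) = X - C (cpos k) := rfl
  rw [this, PL]
  exact Finset.dvd_prod_of_mem _ hk

lemma evalPL_zero (k : ℕ) (s : Finset ℕ) (hk : k ∈ s) : eval (k : ℚ) (PL s cpos) = 0 := by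
  rw [PL, eval_prod_linear]
  exact Finset.prod_eq_zero hk (by simp [cpos])

-- root at 0
lemma Ep_root_zero (m n : ℕ) : (X - C (0 : ℚ)) ∣ Ep m n := by
  rw [dvd_iff_isRoot]
  unfold IsRoot Ep
  have hQ : ∀ k, eval 0 (Qp m n k) = 0 := fun k => by simp [Qp]
  have hR : ∀ k, eval 0 (Rp m n k) = 0 := fun k => by simp [Rp]
  have hNp : eval 0 (Np m n) = (m ! : ℚ) * (n ! : ℚ) := by
    have h1 := val_PL_neg 0 m
    have h2 := val_PL_neg 0 n
    norm_num at h1 h2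
    rw [Np, eval_mul, h1, h2]
  have hP0 : eval 0 (P0 m n) = ((-1) ^ m * (m ! : ℚ)) * ((-1) ^ n * (n ! : ℚ)) := by
    have h1 := prod_sub_shift 0 m (Nat.zero_le m)
    have h2 := prod_sub_shift 0 n (Nat.zero_le n)
    norm_num at h1 h2
    rw [P0, PL, PL, eval_mul, eval_prod_linear, eval_prod_linear]
    norm_num [cpos]
    rw [h1, h2]
  simp only [eval_sub, eval_mul, eval_C, eval_finset_sum, eval_add, hNp, hP0]
  simp only [eval_mul, eval_C, hQ, hR]
  simp only [mul_zero, add_zero, Finset.sum_const_zero, sub_zero]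
  have hs : ((-1 : ℚ)) ^ (m + n) * ((-1 : ℚ) ^ m * (-1 : ℚ) ^ n) = 1 := by
    rw [← pow_add, ← pow_add]
    exact Even.neg_one_pow ⟨m + n, by ring⟩
  linear_combination (-((m ! : ℚ) * (n ! : ℚ))) * hs

-- simple roots for n < k ≤ m
lemma Ep_root_big (m n k : ℕ) (h1 : n < k) (h2 : k ≤ m) : (X - C (k : ℚ)) ∣ Ep m n := by
  rw [dvd_iff_isRoot]
  unfold IsRoot Ep
  have hmem : k ∈ Ioc 0 m := Finset.mem_Ioc.mpr ⟨by omega, h2⟩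
  have hQ : ∀ k' ∈ Ioc 0 n, eval (k : ℚ) (Qp m n k') = 0 := fun k' hk' => by
    have : k ∈ (Ioc 0 m).erase k' := Finset.mem_erase.mpr ⟨by simp at hk'; omega, hmem⟩
    rw [Qp, eval_mul, eval_mul, evalPL_zero k _ this]
    ring
  have hR : ∀ k', k' ≠ k → eval (k : ℚ) (Rp m n k') = 0 := fun k' hk' => by
    have : k ∈ (Ioc 0 m).erase k' := Finset.mem_erase.mpr ⟨Ne.symm hk', hmem⟩
    rw [Rp, eval_mul, eval_mul, evalPL_zero k _ this]
    ring
  have hP0 : eval (k : ℚ) (P0 m n) = 0 := by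
    rw [P0, eval_mul, evalPL_zero k _ hmem]; ring
  simp only [eval_sub, eval_mul, eval_C, eval_finset_sum, eval_add, hP0]
  rw [Finset.sum_congr rfl (fun k' hk' => show aq m n k' * eval (k:ℚ) (Qp m n k')
      + b1 m n k' * eval (k:ℚ) (Rp m n k') = 0 from by
    rw [hQ k' hk', hR k' (by simp at hk'; omega)]; ring)]
  rw [← Finset.add_sum_erase _ (fun x => b2 m n x * eval (k:ℚ) (Rp m n x))
    (Finset.mem_Ioc.mpr ⟨h1, h2⟩)]
  rw [Finset.sum_congr rfl (fun k' hk' => show b2 m n k' * eval (k:ℚ) (Rp m n k') = 0 from by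
    rw [hR k' (Finset.mem_erase.mp hk').1]; ring)]
  simp only [Finset.sum_const_zero]
  linear_combination keyB m n k h1 h2
lemma Ep_root_sq (m n k : ℕ) (h1 : 1 ≤ k) (h2 : k ≤ n) (hmn : n ≤ m) :
    (X - C (k : ℚ)) ^ 2 ∣ Ep m n := by
  have hkn : k ∈ Ioc 0 n := Finset.mem_Ioc.mpr ⟨h1, h2⟩
  have hkm : k ∈ Ioc 0 m := Finset.mem_Ioc.mpr ⟨h1, h2.trans hmn⟩
  have hEp : Ep m n = (Np m n - (C (aq m n k) * Qp m n k + C (b1 m n k) * Rp m n k))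
      - C ((-1 : ℚ) ^ (m + n)) * P0 m n
      - (∑ k' ∈ (Ioc 0 n).erase k, (C (aq m n k') * Qp m n k' + C (b1 m n k') * Rp m n k'))
      - ∑ k' ∈ Ioc n m, C (b2 m n k') * Rp m n k' := by
    rw [Ep, ← Finset.add_sum_erase _ _ hkn]
    ring
  rw [hEp, pow_two]
  have sqG : (X - C (k : ℚ)) * (X - C (k : ℚ)) ∣
      (Np m n - (C (aq m n k) * Qp m n k + C (b1 m n k) * Rp m n k)) := by
    rw [← pow_two]
    apply sq_dvd_of_root_deriv
    · have hRz : eval (k : ℚ) (Rp m n k) = 0 := by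
        rw [Rp, eval_mul, evalPL_zero k _ hkn]; ring
      simp only [eval_sub, eval_add, eval_mul, eval_C, hRz]
      linear_combination keyA m n k h1 h2 hmn
    · have hd : derivative (Np m n - (C (aq m n k) * Qp m n k + C (b1 m n k) * Rp m n k))
          = derivative (Np m n) - (C (aq m n k) * derivative (Qp m n k)
            + C (b1 m n k) * derivative (Rp m n k)) := by
        simp [derivative_sub, derivative_add, derivative_C_mul]
      rw [hd]
      simp only [eval_sub, eval_add, eval_mul, eval_C]
      rw [dval_Np m n k, dval_Qp m n k h1 h2 hmn, dval_Rp m n k h1 h2]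
      linear_combination ((harmonicSum 1 (m + k) - harmonicSum 1 k) +
          (harmonicSum 1 (n + k) - harmonicSum 1 k)) * keyA m n k h1 h2 hmn
        - eval (k : ℚ) (Qp m n k) * keyH m n k h1 h2 hmn
  have sqP0 : (X - C (k : ℚ)) * (X - C (k : ℚ)) ∣ C ((-1 : ℚ) ^ (m + n)) * P0 m n := by
    apply Dvd.dvd.mul_left
    exact mul_dvd_mul (dvd_PL k _ hkm) (dvd_PL k _ hkn)
  have sqS1 : (X - C (k : ℚ)) * (X - C (k : ℚ)) ∣
      ∑ k' ∈ (Ioc 0 n).erase k, (C (aq m n k') * Qp m n k' + C (b1 m n k') * Rp m n k') := by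
    apply Finset.dvd_sum
    intro k' hk'
    have hne : k ≠ k' := fun h => ((Finset.mem_erase.mp hk').1 h.symm)
    have hkm' : k ∈ (Ioc 0 m).erase k' := Finset.mem_erase.mpr ⟨hne, hkm⟩
    have hkn' : k ∈ (Ioc 0 n).erase k' := Finset.mem_erase.mpr ⟨hne, hkn⟩
    apply dvd_add
    · apply Dvd.dvd.mul_left
      rw [Qp, mul_assoc]
      apply Dvd.dvd.mul_left
      exact mul_dvd_mul (dvd_PL k _ hkm') (dvd_PL k _ hkn')
    · apply Dvd.dvd.mul_left
      rw [Rp, mul_assoc]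
      apply Dvd.dvd.mul_left
      exact mul_dvd_mul (dvd_PL k _ hkm') (dvd_PL k _ hkn)
  have sqS2 : (X - C (k : ℚ)) * (X - C (k : ℚ)) ∣
      ∑ k' ∈ Ioc n m, C (b2 m n k') * Rp m n k' := by
    apply Finset.dvd_sum
    intro k' hk'
    have hne : k ≠ k' := by simp at hk'; omega
    have hkm' : k ∈ (Ioc 0 m).erase k' := Finset.mem_erase.mpr ⟨hne, hkm⟩
    apply Dvd.dvd.mul_left
    rw [Rp, mul_assoc]
    apply Dvd.dvd.mul_left
    exact mul_dvd_mul (dvd_PL k _ hkm') (dvd_PL k _ hkn)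
  exact dvd_sub (dvd_sub (dvd_sub sqG sqP0) sqS1) sqS2
lemma PL_monic (s : Finset ℕ) (v : ℕ → ℚ) : (PL s v).Monic := monic_prod_linear s v
lemma PL_nd (s : Finset ℕ) (v : ℕ → ℚ) : (PL s v).natDegree = s.card := natDegree_prod_linear s v

lemma Np_monic (m n : ℕ) : (Np m n).Monic := (PL_monic _ _).mul (PL_monic _ _)
lemma Np_nd (m n : ℕ) : (Np m n).natDegree = m + n := by
  rw [Np, natDegree_mul (PL_monic _ _).ne_zero (PL_monic _ _).ne_zero, PL_nd, PL_nd]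
  simp

lemma P0_monic (m n : ℕ) : (P0 m n).Monic := (PL_monic _ _).mul (PL_monic _ _)
lemma P0_nd (m n : ℕ) : (P0 m n).natDegree = m + n := by
  rw [P0, natDegree_mul (PL_monic _ _).ne_zero (PL_monic _ _).ne_zero, PL_nd, PL_nd]
  simp

lemma Rp_monic (m n k : ℕ) : (Rp m n k).Monic := (monic_X.mul (PL_monic _ _)).mul (PL_monic _ _)
lemma Rp_nd (m n k : ℕ) (hk : k ∈ Ioc 0 m) : (Rp m n k).natDegree = m + n := by
  rw [Rp, natDegree_mul (monic_X.mul (PL_monic _ _)).ne_zero (PL_monic _ _).ne_zero,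
    natDegree_mul monic_X.ne_zero (PL_monic _ _).ne_zero, natDegree_X, PL_nd, PL_nd,
    Finset.card_erase_of_mem hk]
  simp at hk ⊢
  omega

lemma Qp_monic (m n k : ℕ) : (Qp m n k).Monic := (monic_X.mul (PL_monic _ _)).mul (PL_monic _ _)
lemma Qp_nd (m n k : ℕ) (hk : k ∈ Ioc 0 n) (hmn : n ≤ m) :
    (Qp m n k).natDegree = m + n - 1 := by
  have hkm : k ∈ Ioc 0 m := by simp at hk ⊢; omega
  rw [Qp, natDegree_mul (monic_X.mul (PL_monic _ _)).ne_zero (PL_monic _ _).ne_zero,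
    natDegree_mul monic_X.ne_zero (PL_monic _ _).ne_zero, natDegree_X, PL_nd, PL_nd,
    Finset.card_erase_of_mem hkm, Finset.card_erase_of_mem hk]
  simp at hk ⊢
  omega

lemma Ep_nd (m n : ℕ) (hm : 0 < n) (hmn : n ≤ m) : (Ep m n).natDegree ≤ m + n := by
  rw [Ep]
  refine (natDegree_sub_le _ _).trans (max_le ((natDegree_sub_le _ _).trans (max_le
    ((natDegree_sub_le _ _).trans (max_le ?_ ?_)) ?_)) ?_)
  · exact le_of_eq (Np_nd m n)
  · exact (natDegree_C_mul_le _ _).trans (le_of_eq (P0_nd m n))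
  · refine (Polynomial.natDegree_sum_le _ _).trans ((Finset.fold_max_le _).mpr ⟨Nat.zero_le _, ?_⟩)
    intro k hk
    refine (natDegree_add_le _ _).trans (max_le ?_ ?_)
    · exact (natDegree_C_mul_le _ _).trans (by rw [Qp_nd m n k hk hmn]; omega)
    · refine (natDegree_C_mul_le _ _).trans ?_
      rw [Rp_nd m n k (by simp at hk ⊢; omega)]
  · refine (Polynomial.natDegree_sum_le _ _).trans ((Finset.fold_max_le _).mpr ⟨Nat.zero_le _, ?_⟩)
    intro k hk
    refine (natDegree_C_mul_le _ _).trans ?_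
    rw [Rp_nd m n k (by simp at hk ⊢; omega)]

def ee (n k : ℕ) : ℕ := if 1 ≤ k ∧ k ≤ n then 2 else 1

lemma Fp_dvd (m n : ℕ) (hm : 0 < n) (hmn : n ≤ m) :
    ∏ k ∈ range (m + 1), (X - C (k : ℚ)) ^ (ee n k) ∣ Ep m n := by
  apply Finset.prod_dvd_of_coprime
  · intro i _ j _ hij
    exact ((Polynomial.pairwise_coprime_X_sub_C (Nat.cast_injective (R := ℚ)) hij).pow
      (m := ee n i) (n := ee n j))
  · intro k hk
    simp only [Finset.mem_range] at hk
    by_cases h0 : k = 0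
    · subst h0
      simp only [ee]
      norm_num
      have := Ep_root_zero m n
      rwa [map_zero, sub_zero] at this
    · by_cases hkn : k ≤ n
      · have : ee n k = 2 := by unfold ee; simp; omega
        rw [this]
        exact Ep_root_sq m n k (by omega) hkn hmn
      · have : ee n k = 1 := by unfold ee; simp; omega
        rw [this, pow_one]
        exact Ep_root_big m n k (by omega) (by omega)

lemma Fp_nd (m n : ℕ) (hmn : n ≤ m) :
    (∏ k ∈ range (m + 1), (X - C (k : ℚ)) ^ (ee n k)).natDegree = m + 1 + n := by
  rw [Polynomial.natDegree_prod _ _ (fun k _ => pow_ne_zero _ (monic_X_sub_C _).ne_zero)]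
  have : ∀ k ∈ range (m + 1), ((X - C (k : ℚ)) ^ (ee n k)).natDegree = ee n k := by
    intro k _
    rw [natDegree_pow, natDegree_X_sub_C, mul_one]
  rw [Finset.sum_congr rfl this]
  have h2 : ∀ k, ee n k = 1 + (if 1 ≤ k ∧ k ≤ n then 1 else 0) := by
    intro k; unfold ee; by_cases h : 1 ≤ k ∧ k ≤ n <;> simp [h]
  rw [Finset.sum_congr rfl (fun k _ => h2 k), Finset.sum_add_distrib]
  rw [← Finset.card_filter]
  have : (range (m + 1)).filter (fun k => 1 ≤ k ∧ k ≤ n) = Ioc 0 n := by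
    ext x; simp; omega
  rw [this]
  simp

lemma Ep_zero (m n : ℕ) (hm : 0 < n) (hmn : n ≤ m) : Ep m n = 0 := by
  by_contra h
  have h1 := Polynomial.natDegree_le_of_dvd (Fp_dvd m n hm hmn) h
  rw [Fp_nd m n hmn] at h1
  have h2 := Ep_nd m n hm hmn
  omega

lemma coeff_sums (m n : ℕ) (hm : 0 < n) (hmn : n ≤ m) :
    ∑ k ∈ Ioc 0 n, b1 m n k + ∑ k ∈ Ioc n m, b2 m n k = 1 - (-1 : ℚ) ^ (m + n) := by
  have h0 := Ep_zero m n hm hmn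
  have h1 : (Ep m n).coeff (m + n) = 0 := by rw [h0]; simp
  rw [Ep] at h1
  simp only [coeff_sub, finset_sum_coeff, coeff_add, coeff_C_mul] at h1
  have hNp : (Np m n).coeff (m + n) = 1 := by
    have := (Np_monic m n).coeff_natDegree
    rwa [Np_nd] at this
  have hP0 : (P0 m n).coeff (m + n) = 1 := by
    have := (P0_monic m n).coeff_natDegree
    rwa [P0_nd] at this
  have hQ : ∀ k ∈ Ioc 0 n, (Qp m n k).coeff (m + n) = 0 := by
    intro k hk
    apply coeff_eq_zero_of_natDegree_lt
    rw [Qp_nd m n k hk hmn]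
    simp at hk; omega
  have hR1 : ∀ k ∈ Ioc 0 n, (Rp m n k).coeff (m + n) = 1 := by
    intro k hk
    have := (Rp_monic m n k).coeff_natDegree
    rwa [Rp_nd m n k (by simp at hk ⊢; omega)] at this
  have hR2 : ∀ k ∈ Ioc n m, (Rp m n k).coeff (m + n) = 1 := by
    intro k hk
    have := (Rp_monic m n k).coeff_natDegree
    rwa [Rp_nd m n k (by simp at hk ⊢; omega)] at this
  rw [hNp, hP0] at h1
  rw [Finset.sum_congr rfl (fun k hk => by rw [hQ k hk, hR1 k hk] : ∀ k ∈ Ioc 0 n,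
    aq m n k * (Qp m n k).coeff (m + n) + b1 m n k * (Rp m n k).coeff (m + n)
      = aq m n k * 0 + b1 m n k * 1)] at h1
  rw [Finset.sum_congr rfl (fun k hk => by rw [hR2 k hk] : ∀ k ∈ Ioc n m,
    b2 m n k * (Rp m n k).coeff (m + n) = b2 m n k * 1)] at h1
  simp only [mul_zero, zero_add, mul_one] at h1
  linarith

end

theorem stmt_1 (m n : ℕ) (hm : 0 < n) (hmn : n ≤ m) :
    (∑ k ∈ Finset.range (n + 1),
      ((m + k).choose k : ℚ) * (m.choose k : ℚ) * ((n + k).choose k : ℚ) * (n.choose k : ℚ) *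
        (1 + (k : ℚ) * (harmonicSum 1 (m + k) + harmonicSum 1 (m - k) + harmonicSum 1 (n + k)
          + harmonicSum 1 (n - k) - 4 * harmonicSum 1 k)))
    + (∑ k ∈ Finset.Icc (n + 1) m,
      (-1 : ℚ) ^ (k - n) * ((m + k).choose k : ℚ) * (m.choose k : ℚ) * ((n + k).choose k : ℚ)
        / ((k - 1).choose n : ℚ))
    = (-1 : ℚ) ^ (m + n) := by
  have hsum := coeff_sums m n hm hmn
  set s : ℚ := (-1 : ℚ) ^ (m + n) with hs
  have hsq : s * s = 1 := by
    rw [hs, ← pow_add]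
    exact Even.neg_one_pow ⟨m + n, rfl⟩
  -- first sum = 1 + ∑_{Ioc 0 n} u1
  have hrange : Finset.range (n + 1) = insert 0 (Ioc 0 n) := by
    ext x; simp
  have h0mem : (0 : ℕ) ∉ Ioc 0 n := by simp
  have hfirst : (∑ k ∈ Finset.range (n + 1),
      ((m + k).choose k : ℚ) * (m.choose k : ℚ) * ((n + k).choose k : ℚ) * (n.choose k : ℚ) *
        (1 + (k : ℚ) * (harmonicSum 1 (m + k) + harmonicSum 1 (m - k) + harmonicSum 1 (n + k)
          + harmonicSum 1 (n - k) - 4 * harmonicSum 1 k)))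
      = 1 + ∑ k ∈ Ioc 0 n, u1 m n k := by
    rw [hrange, Finset.sum_insert h0mem]
    congr 1
    simp
  have hsecond : (∑ k ∈ Finset.Icc (n + 1) m,
      (-1 : ℚ) ^ (k - n) * ((m + k).choose k : ℚ) * (m.choose k : ℚ) * ((n + k).choose k : ℚ)
        / ((k - 1).choose n : ℚ)) = ∑ k ∈ Ioc n m, u2 m n k := by
    rw [Finset.Icc_add_one_left_eq_Ioc]
    exact Finset.sum_congr rfl (fun k _ => rfl)
  rw [hfirst, hsecond]
  have hu1 : ∑ k ∈ Ioc 0 n, u1 m n k = s * ∑ k ∈ Ioc 0 n, b1 m n k := by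
    rw [Finset.mul_sum]
    refine Finset.sum_congr rfl ?_
    intro k _
    rw [b1, ← hs, ← mul_assoc, hsq, one_mul]
  have hu2 : ∑ k ∈ Ioc n m, u2 m n k = s * ∑ k ∈ Ioc n m, b2 m n k := by
    rw [Finset.mul_sum]
    refine Finset.sum_congr rfl ?_
    intro k _
    rw [b2, ← hs, ← mul_assoc, hsq, one_mul]
  rw [hu1, hu2]
  linear_combination s * hsum - hsq
end

section
/- Let $m \geq n$ be positive integers and let $1 \leq k \leq n$. Then $\lim_{x \to -k} (x+k)^2 \cdot \frac{x\,(1-x)_n\,(1-x)_m}{(x)_{n+1}(x)_{m+1}} = -k\binom{m+k}{k}\binom{m}{k}\binom{n+k}{k}\binom{n}{k}$. Equivalently, $\frac{-k\,(k+1)_n\,(k+1)_m}{((-k)_k)^2\,(n-k)!\,(m-k)!} = -k\binom{m+k}{k}\binom{m}{k}\binom{n+k}{k}\binom{n}{k}$. -/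
open Finset Filter Topology

/-- Rising factorial `(a)_r = a(a+1)⋯(a+r-1)` over the reals. -/
def riseFactR (a : ℝ) (r : ℕ) : ℝ := ∏ j ∈ Finset.range r, (a + j)

/-- Rising factorial `(a)_r = a(a+1)⋯(a+r-1)` over the rationals. -/
def riseFact (a : ℚ) (r : ℕ) : ℚ := ∏ j ∈ Finset.range r, (a + j)

set_option maxRecDepth 4000
open Finset

variable {K : Type*} [Field K] [CharZero K]

lemma L1mul (k : ℕ) : ∀ r : ℕ, (k.factorial : K) * ∏ j ∈ Finset.range r, ((k:K)+1+j) = ((k+r).factorial : K) := by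
  intro r
  induction r with
  | zero => simp
  | succ r ih =>
    rw [Finset.prod_range_succ, ← mul_assoc, ih]
    rw [show k + (r+1) = (k+r)+1 by ring, Nat.factorial_succ]
    push_cast
    ring

lemma L1 (k r : ℕ) : ∏ j ∈ Finset.range r, ((k:K)+1+j) = ((k+r).factorial : K) / (k.factorial : K) := by
  rw [eq_div_iff (by exact_mod_cast k.factorial_ne_zero), mul_comm, L1mul]

lemma natprod (k : ℕ) : ∏ j ∈ Finset.range k, (j+1) = k.factorial := by
  induction k with
  | zero => simp
  | succ k ih => rw [Finset.prod_range_succ, ih, Nat.factorial_succ]; ring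

lemma L2 (k : ℕ) : ∏ j ∈ Finset.range k, ((j:K) - k) = (-1)^k * (k.factorial : K) := by
  have h : ∀ j ∈ Finset.range k, ((j:K) - k) = -(((k - j : ℕ)):K) := by
    intro j hj
    have hjk := Finset.mem_range.mp hj
    rw [Nat.cast_sub hjk.le]
    ring
  rw [Finset.prod_congr rfl h]
  have h2 : ∀ j ∈ Finset.range k, (-(((k - j : ℕ)):K)) = (-1 : K) * ((k - j : ℕ) : K) := by
    intro j _; ring
  rw [Finset.prod_congr rfl h2, Finset.prod_mul_distrib, Finset.prod_const, Finset.card_range]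
  congr 1
  rw [← Nat.cast_prod]
  norm_cast
  rw [← natprod k, ← Finset.prod_range_reflect (fun j => j + 1) k]
  apply Finset.prod_congr rfl
  intro j hj
  have := Finset.mem_range.mp hj
  omega

lemma L3 (k n : ℕ) (hkn : k ≤ n) : ∏ j ∈ Finset.Ico (k+1) (n+1), ((j:K) - k) = ((n-k).factorial : K) := by
  rw [Finset.prod_Ico_eq_prod_range]
  have h : n + 1 - (k+1) = n - k := by omega
  rw [h]
  induction (n-k) with
  | zero => simp
  | succ r ih =>
    rw [Finset.prod_range_succ, ih, Nat.factorial_succ]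
    push_cast
    ring

lemma Lerase (k n : ℕ) (hkn : k ≤ n) :
    ∏ j ∈ (Finset.range (n+1)).erase k, ((j:K) - k)
      = (-1)^k * (k.factorial : K) * ((n-k).factorial : K) := by
  have hset : (Finset.range (n+1)).erase k = Finset.range k ∪ Finset.Ico (k+1) (n+1) := by
    ext j
    simp only [Finset.mem_erase, Finset.mem_range, Finset.mem_union, Finset.mem_Ico]
    omega
  have hdisj : Disjoint (Finset.range k) (Finset.Ico (k+1) (n+1)) := by
    rw [Finset.disjoint_left]
    intro j hj hj2
    simp only [Finset.mem_range] at hj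
    simp only [Finset.mem_Ico] at hj2
    omega
  rw [hset, Finset.prod_union hdisj, L2, L3 k n hkn]

lemma keyval (n k : ℕ) (hkn : k ≤ n) :
    ((n+k).factorial : K) = (((n+k).choose k : K) * (n.choose k : K)) * ((k.factorial : K))^2 * ((n-k).factorial : K) := by
  have h1 : (n+k).choose k * k.factorial * n.factorial = (n+k).factorial := by
    have := Nat.choose_mul_factorial_mul_factorial (show k ≤ n + k by omega)
    rwa [show n + k - k = n by omega] at this
  have h2 : n.choose k * k.factorial * (n-k).factorial = n.factorial :=
    Nat.choose_mul_factorial_mul_factorial hkn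
  have : ((n+k).choose k * n.choose k) * (k.factorial)^2 * (n-k).factorial = (n+k).factorial := by
    rw [← h1, ← h2]; ring
  exact_mod_cast this.symm

lemma core (m n k : ℕ) (hkn : k ≤ n) (hkm : k ≤ m) :
    (-(k:K)) * (((n+k).factorial : K) / (k.factorial : K)) * (((m+k).factorial : K) / (k.factorial : K))
      / (((-1:K)^k * (k.factorial : K) * ((n-k).factorial : K)) * ((-1:K)^k * (k.factorial : K) * ((m-k).factorial : K)))
    = -(k:K) * ((m + k).choose k : K) * (m.choose k : K) * ((n + k).choose k : K) * (n.choose k : K) := by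
  have hf : (k.factorial : K) ≠ 0 := by exact_mod_cast k.factorial_ne_zero
  have hnf : ((n-k).factorial : K) ≠ 0 := by exact_mod_cast (n-k).factorial_ne_zero
  have hmf : ((m-k).factorial : K) ≠ 0 := by exact_mod_cast (m-k).factorial_ne_zero
  have hneg : (-1:K)^k ≠ 0 := pow_ne_zero _ (by norm_num)
  rw [keyval n k hkn, keyval m k hkm]
  have hsq : (-1:K)^k * (-1:K)^k = 1 := by rw [← pow_add, ← two_mul, pow_mul]; simp
  field_simp
  ring_nf
  have h2 : ((-1:K)) ^ (k*2) = 1 := by rw [mul_comm, pow_mul]; norm_num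
  simp only [h2, mul_one]


noncomputable def gAux (n m k : ℕ) (x : ℝ) : ℝ := x * riseFactR (1 - x) n * riseFactR (1 - x) m /
  ((∏ j ∈ (Finset.range (n+1)).erase k, (x + j)) * (∏ j ∈ (Finset.range (m+1)).erase k, (x + j)))

theorem stmt_5 (m n k : ℕ) (hn : 0 < n) (hmn : n ≤ m) (hk1 : 1 ≤ k) (hkn : k ≤ n) :
    Filter.Tendsto
      (fun x : ℝ => (x + k) ^ 2 *
        (x * riseFactR (1 - x) n * riseFactR (1 - x) m
          / (riseFactR x (n + 1) * riseFactR x (m + 1))))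
      (𝓝[≠] (-(k : ℝ)))
      (𝓝 (-(k : ℝ) * ((m + k).choose k : ℝ) * (m.choose k : ℝ) * ((n + k).choose k : ℝ)
        * (n.choose k : ℝ)))
    ∧
    -(k : ℚ) * riseFact ((k : ℚ) + 1) n * riseFact ((k : ℚ) + 1) m
        / ((riseFact (-(k : ℚ)) k) ^ 2 * ((n - k).factorial : ℚ) * ((m - k).factorial : ℚ))
      = -(k : ℚ) * ((m + k).choose k : ℚ) * (m.choose k : ℚ) * ((n + k).choose k : ℚ)
        * (n.choose k : ℚ) := by
  have hkm : k ≤ m := hkn.trans hmn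
  constructor
  · -- the limit statement
    set c : ℝ := -(k : ℝ) with hc
    -- values of the pieces at c
    have hPc : (∏ j ∈ (Finset.range (n+1)).erase k, (c + j))
        = (-1:ℝ)^k * (k.factorial : ℝ) * ((n-k).factorial : ℝ) := by
      rw [← Lerase k n hkn]
      exact Finset.prod_congr rfl (fun j _ => by rw [hc]; ring)
    have hQc : (∏ j ∈ (Finset.range (m+1)).erase k, (c + j))
        = (-1:ℝ)^k * (k.factorial : ℝ) * ((m-k).factorial : ℝ) := by
      rw [← Lerase k m hkm]
      exact Finset.prod_congr rfl (fun j _ => by rw [hc]; ring)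
    have h1c : (1:ℝ) - c = (k:ℝ) + 1 := by rw [hc]; ring
    have hA : riseFactR (1 - c) n = ((n+k).factorial : ℝ) / (k.factorial : ℝ) := by
      rw [h1c]
      show (∏ j ∈ Finset.range n, ((k:ℝ) + 1 + j)) = _
      rw [L1, add_comm k n]
    have hB : riseFactR (1 - c) m = ((m+k).factorial : ℝ) / (k.factorial : ℝ) := by
      rw [h1c]
      show (∏ j ∈ Finset.range m, ((k:ℝ) + 1 + j)) = _
      rw [L1, add_comm k m]
    -- value of gAux at c
    have hval : gAux n m k c = -(k : ℝ) * ((m + k).choose k : ℝ) * (m.choose k : ℝ)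
        * ((n + k).choose k : ℝ) * (n.choose k : ℝ) := by
      rw [gAux, hPc, hQc, hA, hB, hc]
      exact core m n k hkn hkm
    -- continuity of gAux at c
    have hcontN : Continuous fun x : ℝ => x * riseFactR (1 - x) n * riseFactR (1 - x) m := by
      simp only [riseFactR]; fun_prop
    have hcontP : Continuous fun x : ℝ => ∏ j ∈ (Finset.range (n+1)).erase k, (x + (j:ℝ)) := by
      fun_prop
    have hcontQ : Continuous fun x : ℝ => ∏ j ∈ (Finset.range (m+1)).erase k, (x + (j:ℝ)) := by
      fun_prop
    have hden : (∏ j ∈ (Finset.range (n+1)).erase k, (c + j))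
        * (∏ j ∈ (Finset.range (m+1)).erase k, (c + j)) ≠ 0 := by
      rw [hPc, hQc]
      have h1 : (k.factorial : ℝ) ≠ 0 := by exact_mod_cast k.factorial_ne_zero
      have h2 : ((n-k).factorial : ℝ) ≠ 0 := by exact_mod_cast (n-k).factorial_ne_zero
      have h3 : ((m-k).factorial : ℝ) ≠ 0 := by exact_mod_cast (m-k).factorial_ne_zero
      have h4 : (-1:ℝ)^k ≠ 0 := pow_ne_zero _ (by norm_num)
      positivity
    have hg : Filter.Tendsto (gAux n m k) (𝓝 c) (𝓝 (gAux n m k c)) := by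
      apply Filter.Tendsto.div
      · exact hcontN.continuousAt
      · exact (hcontP.mul hcontQ).continuousAt
      · exact hden
    rw [← hval]
    apply Filter.Tendsto.congr' _ (hg.mono_left nhdsWithin_le_nhds)
    filter_upwards [self_mem_nhdsWithin] with x hx
    have hx0 : x + (k:ℝ) ≠ 0 := by
      intro h
      apply hx
      simp only [Set.mem_singleton_iff, hc]
      linarith
    have hkn' : k ∈ Finset.range (n+1) := Finset.mem_range.mpr (by omega)
    have hkm' : k ∈ Finset.range (m+1) := Finset.mem_range.mpr (by omega)
    have hsplitn : riseFactR x (n+1)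
        = (x + k) * ∏ j ∈ (Finset.range (n+1)).erase k, (x + j) :=
      (Finset.mul_prod_erase _ _ hkn').symm
    have hsplitm : riseFactR x (m+1)
        = (x + k) * ∏ j ∈ (Finset.range (m+1)).erase k, (x + j) :=
      (Finset.mul_prod_erase _ _ hkm').symm
    rw [gAux, hsplitn, hsplitm,
      show ((x + (k:ℝ)) * ∏ j ∈ (Finset.range (n+1)).erase k, (x + j))
          * ((x + (k:ℝ)) * ∏ j ∈ (Finset.range (m+1)).erase k, (x + j))
        = (x + (k:ℝ))^2 * ((∏ j ∈ (Finset.range (n+1)).erase k, (x + j))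
          * (∏ j ∈ (Finset.range (m+1)).erase k, (x + j))) from by ring,
      mul_div_assoc', mul_div_mul_left _ _ (pow_ne_zero 2 hx0)]
  · -- the rational identity
    have hA : riseFact ((k : ℚ) + 1) n = ((n+k).factorial : ℚ) / (k.factorial : ℚ) := by
      show (∏ j ∈ Finset.range n, ((k:ℚ) + 1 + j)) = _
      rw [L1, add_comm k n]
    have hB : riseFact ((k : ℚ) + 1) m = ((m+k).factorial : ℚ) / (k.factorial : ℚ) := by
      show (∏ j ∈ Finset.range m, ((k:ℚ) + 1 + j)) = _
      rw [L1, add_comm k m]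
    have hC : riseFact (-(k : ℚ)) k = (-1:ℚ)^k * (k.factorial : ℚ) := by
      rw [← L2 k]
      exact Finset.prod_congr rfl (fun j _ => by ring)
    rw [hA, hB, hC,
      show ((-1:ℚ)^k * (k.factorial : ℚ))^2 * ((n-k).factorial : ℚ) * ((m-k).factorial : ℚ)
        = ((-1:ℚ)^k * (k.factorial : ℚ) * ((n-k).factorial : ℚ))
          * ((-1:ℚ)^k * (k.factorial : ℚ) * ((m-k).factorial : ℚ)) from by ring]
    exact core m n k hkn hkm
end

section
/- Let $m \geq n$ be positive integers, let $1 \leq k \leq n$, and define $g(x) = \frac{x\,(1-x)_n\,(1-x)_m}{((x)_k)^2\,(x+k+1)_{n-k}\,(x+k+1)_{m-k}}$ for real $x$ near $-k$. Then $g'(-k) = \binom{m+k}{k}\binom{m}{k}\binom{n+k}{k}\binom{n}{k}\left[1 + k\left(H_{m+k}^{(1)} + H_{m-k}^{(1)} + H_{n+k}^{(1)} + H_{n-k}^{(1)} - 4H_k^{(1)}\right)\right]$. -/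
open Finset Nat

lemma sum_erase_eq (r : ℕ) (f : ℕ → ℝ) (hf : ∀ i ∈ Finset.range r, f i ≠ 0) (d : ℝ) :
    ∑ i ∈ Finset.range r, (∏ j ∈ (Finset.range r).erase i, f j) * d
      = (∏ j ∈ Finset.range r, f j) * ∑ i ∈ Finset.range r, d / f i := by
  rw [Finset.mul_sum]
  refine Finset.sum_congr rfl fun i hi => ?_
  rw [← Finset.mul_prod_erase _ _ hi]
  field_simp [hf i hi]

lemma prod_add_one (r : ℕ) : ∏ j ∈ Finset.range r, ((j:ℝ) + 1) = r ! := by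
  have h2 : ((∏ x ∈ Finset.range r, (x + 1) : ℕ) : ℝ) = (r ! : ℝ) := by
    exact_mod_cast Finset.prod_range_add_one_eq_factorial r
  rw [← h2]
  push_cast
  rfl

lemma prod_shift (k r : ℕ) : (k ! : ℝ) * ∏ j ∈ Finset.range r, ((k:ℝ) + 1 + j) = ((k + r)! : ℝ) := by
  induction r with
  | zero => simp
  | succ r ih =>
      rw [Finset.prod_range_succ, ← mul_assoc, ih,
        show k + (r+1) = (k+r) + 1 from rfl, Nat.factorial_succ]
      push_cast
      ring

lemma prod_negk (k : ℕ) : ∏ j ∈ Finset.range k, (-(k:ℝ) + j) = (-1)^k * k ! := by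
  rw [← Finset.prod_range_reflect]
  have h : ∀ j ∈ Finset.range k, (-(k:ℝ) + ((k - 1 - j : ℕ) : ℝ)) = (-1) * ((j:ℝ) + 1) := by
    intro j hj
    simp only [Finset.mem_range] at hj
    have e : k - 1 - j = k - (1 + j) := by omega
    rw [e, Nat.cast_sub (by omega)]
    push_cast
    ring
  rw [Finset.prod_congr rfl h, Finset.prod_mul_distrib, Finset.prod_const,
    Finset.card_range, prod_add_one]

lemma sum_negk (k : ℕ) :
    ∑ j ∈ Finset.range k, (1:ℝ) / (-(k:ℝ) + j) = -∑ j ∈ Finset.range k, 1 / ((j:ℝ) + 1) := by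
  rw [← Finset.sum_range_reflect, ← Finset.sum_neg_distrib]
  refine Finset.sum_congr rfl fun j hj => ?_
  simp only [Finset.mem_range] at hj
  have e : k - 1 - j = k - (1 + j) := by omega
  rw [e, Nat.cast_sub (by omega)]
  push_cast
  rw [show (-(k:ℝ) + ((k:ℝ) - (1 + (j:ℝ)))) = -((j:ℝ) + 1) by ring, div_neg]

lemma harm_cast (r : ℕ) : ((harmonicSum 1 r : ℚ) : ℝ) = ∑ j ∈ Finset.range r, 1 / ((j:ℝ) + 1) := by
  unfold harmonicSum
  push_cast
  simp

lemma sum_split (k r : ℕ) :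
    ∑ j ∈ Finset.range (k + r), (1:ℝ) / ((j:ℝ) + 1)
      = (∑ j ∈ Finset.range k, 1 / ((j:ℝ) + 1)) + ∑ j ∈ Finset.range r, 1 / ((k:ℝ) + 1 + j) := by
  rw [Finset.sum_range_add]
  congr 1
  exact Finset.sum_congr rfl fun j _ => by push_cast; ring_nf

lemma deriv_sum_eval (r : ℕ) (f g : ℕ → ℝ) (hfg : ∀ i, f i = g i)
    (hg : ∀ i ∈ Finset.range r, g i ≠ 0) (d P S : ℝ)
    (hP : ∏ j ∈ Finset.range r, g j = P) (hS : ∑ i ∈ Finset.range r, 1 / g i = S) :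
    P * (d * S) = ∑ i ∈ Finset.range r, (∏ j ∈ (Finset.range r).erase i, f j) • d := by
  have hfg' : f = g := funext hfg
  simp only [smul_eq_mul, hfg']
  have h2 : ∑ i ∈ Finset.range r, d / g i = d * ∑ i ∈ Finset.range r, 1 / g i := by
    rw [Finset.mul_sum]
    exact Finset.sum_congr rfl fun i _ => by rw [mul_one_div]
  rw [sum_erase_eq r g hg d, h2, hS, hP]

theorem stmt_7 (m n k : ℕ) (hn : 0 < n) (hmn : n ≤ m) (hk1 : 1 ≤ k) (hkn : k ≤ n) :
    deriv
      (fun x : ℝ => x * riseFactR (1 - x) n * riseFactR (1 - x) m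
        / ((riseFactR x k) ^ 2 * riseFactR (x + k + 1) (n - k) * riseFactR (x + k + 1) (m - k)))
      (-(k : ℝ))
    = ((m + k).choose k : ℝ) * (m.choose k : ℝ) * ((n + k).choose k : ℝ) * (n.choose k : ℝ)
      * (1 + (k : ℝ) * ((harmonicSum 1 (m + k) : ℝ) + (harmonicSum 1 (m - k) : ℝ)
        + (harmonicSum 1 (n + k) : ℝ) + (harmonicSum 1 (n - k) : ℝ) - 4 * (harmonicSum 1 k : ℝ))) := by
  have hkf : (k ! : ℝ) ≠ 0 := Nat.cast_ne_zero.mpr (Nat.factorial_ne_zero k)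
  have hnf : (n ! : ℝ) ≠ 0 := Nat.cast_ne_zero.mpr (Nat.factorial_ne_zero n)
  have hmf : (m ! : ℝ) ≠ 0 := Nat.cast_ne_zero.mpr (Nat.factorial_ne_zero m)
  have hCn : (((n - k)! : ℕ) : ℝ) ≠ 0 := Nat.cast_ne_zero.mpr (Nat.factorial_ne_zero _)
  have hCm : (((m - k)! : ℕ) : ℝ) ≠ 0 := Nat.cast_ne_zero.mpr (Nat.factorial_ne_zero _)
  -- raw derivatives of the five pieces
  have hFraw := HasDerivAt.finset_prod (u := Finset.range k)
    (f := fun (i : ℕ) (x : ℝ) => x + (i:ℝ)) (f' := fun _ => (1:ℝ)) (x := -(k:ℝ))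
    (fun i _ => (hasDerivAt_id _).add_const _)
  have huraw := HasDerivAt.finset_prod (u := Finset.range n)
    (f := fun (i : ℕ) (x : ℝ) => 1 - x + (i:ℝ)) (f' := fun _ => (-1:ℝ)) (x := -(k:ℝ))
    (fun i _ => ((hasDerivAt_id _).const_sub 1).add_const _)
  have hvraw := HasDerivAt.finset_prod (u := Finset.range m)
    (f := fun (i : ℕ) (x : ℝ) => 1 - x + (i:ℝ)) (f' := fun _ => (-1:ℝ)) (x := -(k:ℝ))
    (fun i _ => ((hasDerivAt_id _).const_sub 1).add_const _)
  have hGraw := HasDerivAt.finset_prod (u := Finset.range (n - k))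
    (f := fun (i : ℕ) (x : ℝ) => x + (k:ℝ) + 1 + (i:ℝ)) (f' := fun _ => (1:ℝ)) (x := -(k:ℝ))
    (fun i _ => by simpa [add_assoc] using (hasDerivAt_id (-(k:ℝ))).add_const ((k:ℝ) + 1 + (i:ℝ)))
  have hG2raw := HasDerivAt.finset_prod (u := Finset.range (m - k))
    (f := fun (i : ℕ) (x : ℝ) => x + (k:ℝ) + 1 + (i:ℝ)) (f' := fun _ => (1:ℝ)) (x := -(k:ℝ))
    (fun i _ => by simpa [add_assoc] using (hasDerivAt_id (-(k:ℝ))).add_const ((k:ℝ) + 1 + (i:ℝ)))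
  -- evaluated derivative values
  have hPu : ∏ j ∈ Finset.range n, ((k:ℝ) + 1 + (j:ℝ)) = ((k + n)! : ℝ) / (k ! : ℝ) := by
    rw [eq_div_iff hkf, mul_comm]; exact prod_shift k n
  have hPv : ∏ j ∈ Finset.range m, ((k:ℝ) + 1 + (j:ℝ)) = ((k + m)! : ℝ) / (k ! : ℝ) := by
    rw [eq_div_iff hkf, mul_comm]; exact prod_shift k m
  have edF : ((-1:ℝ)^k * (k ! : ℝ)) * (1 * (-∑ j ∈ Finset.range k, 1 / ((j:ℝ) + 1)))
      = ∑ i ∈ Finset.range k, (∏ j ∈ (Finset.range k).erase i, (-(k:ℝ) + (j:ℝ))) • (1:ℝ) :=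
    deriv_sum_eval k _ _ (fun i => rfl)
      (fun i hi => by
        have h1 : (i:ℝ) < k := by exact_mod_cast Finset.mem_range.mp hi
        intro h; linarith)
      1 _ _ (prod_negk k) (sum_negk k)
  have edu : (((k + n)! : ℝ) / (k ! : ℝ)) * ((-1) * ∑ i ∈ Finset.range n, 1 / ((k:ℝ) + 1 + (i:ℝ)))
      = ∑ i ∈ Finset.range n, (∏ j ∈ (Finset.range n).erase i, (1 - -(k:ℝ) + (j:ℝ))) • (-1:ℝ) :=
    deriv_sum_eval n _ (fun j => (k:ℝ) + 1 + (j:ℝ)) (fun i => by ring)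
      (fun i _ => by positivity) (-1) _ _ hPu rfl
  have edv : (((k + m)! : ℝ) / (k ! : ℝ)) * ((-1) * ∑ i ∈ Finset.range m, 1 / ((k:ℝ) + 1 + (i:ℝ)))
      = ∑ i ∈ Finset.range m, (∏ j ∈ (Finset.range m).erase i, (1 - -(k:ℝ) + (j:ℝ))) • (-1:ℝ) :=
    deriv_sum_eval m _ (fun j => (k:ℝ) + 1 + (j:ℝ)) (fun i => by ring)
      (fun i _ => by positivity) (-1) _ _ hPv rfl
  have edG : (((n - k)! : ℕ) : ℝ) * (1 * ∑ i ∈ Finset.range (n - k), 1 / ((i:ℝ) + 1))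
      = ∑ i ∈ Finset.range (n - k), (∏ j ∈ (Finset.range (n - k)).erase i, (-(k:ℝ) + (k:ℝ) + 1 + (j:ℝ))) • (1:ℝ) :=
    deriv_sum_eval (n - k) _ (fun j => (j:ℝ) + 1) (fun i => by ring)
      (fun i _ => by positivity) 1 _ _ (prod_add_one (n - k)) rfl
  have edG2 : (((m - k)! : ℕ) : ℝ) * (1 * ∑ i ∈ Finset.range (m - k), 1 / ((i:ℝ) + 1))
      = ∑ i ∈ Finset.range (m - k), (∏ j ∈ (Finset.range (m - k)).erase i, (-(k:ℝ) + (k:ℝ) + 1 + (j:ℝ))) • (1:ℝ) :=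
    deriv_sum_eval (m - k) _ (fun j => (j:ℝ) + 1) (fun i => by ring)
      (fun i _ => by positivity) 1 _ _ (prod_add_one (m - k)) rfl
  -- HasDerivAt for the pieces, with nice values
  have hF : HasDerivAt (fun x : ℝ => riseFactR x k)
      (((-1:ℝ)^k * (k ! : ℝ)) * (1 * (-∑ j ∈ Finset.range k, 1 / ((j:ℝ) + 1)))) (-(k:ℝ)) := by
    rw [edF]; exact hFraw.congr_of_eventuallyEq (Filter.Eventually.of_forall fun x => by simp [riseFactR, Finset.prod_apply])
  have hu : HasDerivAt (fun x : ℝ => riseFactR (1 - x) n)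
      ((((k + n)! : ℝ) / (k ! : ℝ)) * ((-1) * ∑ i ∈ Finset.range n, 1 / ((k:ℝ) + 1 + (i:ℝ)))) (-(k:ℝ)) := by
    rw [edu]; exact huraw.congr_of_eventuallyEq (Filter.Eventually.of_forall fun x => by simp [riseFactR, Finset.prod_apply])
  have hv : HasDerivAt (fun x : ℝ => riseFactR (1 - x) m)
      ((((k + m)! : ℝ) / (k ! : ℝ)) * ((-1) * ∑ i ∈ Finset.range m, 1 / ((k:ℝ) + 1 + (i:ℝ)))) (-(k:ℝ)) := by
    rw [edv]; exact hvraw.congr_of_eventuallyEq (Filter.Eventually.of_forall fun x => by simp [riseFactR, Finset.prod_apply])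
  have hG : HasDerivAt (fun x : ℝ => riseFactR (x + (k:ℝ) + 1) (n - k))
      ((((n - k)! : ℕ) : ℝ) * (1 * ∑ i ∈ Finset.range (n - k), 1 / ((i:ℝ) + 1))) (-(k:ℝ)) := by
    rw [edG]; exact hGraw.congr_of_eventuallyEq (Filter.Eventually.of_forall fun x => by simp [riseFactR, Finset.prod_apply])
  have hG2 : HasDerivAt (fun x : ℝ => riseFactR (x + (k:ℝ) + 1) (m - k))
      ((((m - k)! : ℕ) : ℝ) * (1 * ∑ i ∈ Finset.range (m - k), 1 / ((i:ℝ) + 1))) (-(k:ℝ)) := by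
    rw [edG2]; exact hG2raw.congr_of_eventuallyEq (Filter.Eventually.of_forall fun x => by simp [riseFactR, Finset.prod_apply])
  -- value lemmas for the functions at -k
  have eF0 : riseFactR (-(k:ℝ)) k = (-1:ℝ)^k * (k ! : ℝ) := prod_negk k
  have eu0 : riseFactR (1 - -(k:ℝ)) n = ((k + n)! : ℝ) / (k ! : ℝ) := by
    rw [← hPu]
    exact Finset.prod_congr rfl (fun j _ => by ring)
  have ev0 : riseFactR (1 - -(k:ℝ)) m = ((k + m)! : ℝ) / (k ! : ℝ) := by
    rw [← hPv]
    exact Finset.prod_congr rfl (fun j _ => by ring)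
  have eG0 : riseFactR (-(k:ℝ) + (k:ℝ) + 1) (n - k) = (((n - k)! : ℕ) : ℝ) := by
    rw [← prod_add_one (n - k)]
    exact Finset.prod_congr rfl (fun j _ => by ring)
  have eG20 : riseFactR (-(k:ℝ) + (k:ℝ) + 1) (m - k) = (((m - k)! : ℕ) : ℝ) := by
    rw [← prod_add_one (m - k)]
    exact Finset.prod_congr rfl (fun j _ => by ring)
  have hD0 : riseFactR (-(k:ℝ)) k ^ 2 * riseFactR (-(k:ℝ) + (k:ℝ) + 1) (n - k)
      * riseFactR (-(k:ℝ) + (k:ℝ) + 1) (m - k) ≠ 0 := by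
    rw [eF0, eG0, eG20]
    exact mul_ne_zero (mul_ne_zero (pow_ne_zero 2
      (mul_ne_zero (pow_ne_zero k (by norm_num)) hkf)) hCn) hCm
  -- combine
  have hN : HasDerivAt (fun x : ℝ => x * riseFactR (1 - x) n * riseFactR (1 - x) m)
      ((1 * riseFactR (1 - -(k:ℝ)) n
          + -(k:ℝ) * ((((k + n)! : ℝ) / (k ! : ℝ)) * ((-1) * ∑ i ∈ Finset.range n, 1 / ((k:ℝ) + 1 + (i:ℝ)))))
        * riseFactR (1 - -(k:ℝ)) m
        + -(k:ℝ) * riseFactR (1 - -(k:ℝ)) n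
          * ((((k + m)! : ℝ) / (k ! : ℝ)) * ((-1) * ∑ i ∈ Finset.range m, 1 / ((k:ℝ) + 1 + (i:ℝ)))))
      (-(k:ℝ)) := ((hasDerivAt_id _).mul hu).mul hv
  have hD : HasDerivAt (fun x : ℝ => riseFactR x k ^ 2 * riseFactR (x + (k:ℝ) + 1) (n - k)
        * riseFactR (x + (k:ℝ) + 1) (m - k))
      ((((2:ℕ):ℝ) * riseFactR (-(k:ℝ)) k ^ 1
            * (((-1:ℝ)^k * (k ! : ℝ)) * (1 * (-∑ j ∈ Finset.range k, 1 / ((j:ℝ) + 1))))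
          * riseFactR (-(k:ℝ) + (k:ℝ) + 1) (n - k)
          + riseFactR (-(k:ℝ)) k ^ 2
            * ((((n - k)! : ℕ) : ℝ) * (1 * ∑ i ∈ Finset.range (n - k), 1 / ((i:ℝ) + 1))))
        * riseFactR (-(k:ℝ) + (k:ℝ) + 1) (m - k)
        + riseFactR (-(k:ℝ)) k ^ 2 * riseFactR (-(k:ℝ) + (k:ℝ) + 1) (n - k)
          * ((((m - k)! : ℕ) : ℝ) * (1 * ∑ i ∈ Finset.range (m - k), 1 / ((i:ℝ) + 1))))
      (-(k:ℝ)) := ((hF.pow 2).mul hG).mul hG2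
  have hq := hN.div hD hD0
  rw [show deriv (fun x : ℝ => x * riseFactR (1 - x) n * riseFactR (1 - x) m / (riseFactR x k ^ 2 * riseFactR (x + (k:ℝ) + 1) (n - k) * riseFactR (x + (k:ℝ) + 1) (m - k))) (-(k:ℝ)) = _ from hq.deriv]
  rw [eF0, eu0, ev0, eG0, eG20]
  -- right-hand side
  rw [show m + k = k + m from Nat.add_comm m k, show n + k = k + n from Nat.add_comm n k]
  have hch1 : (((k + m).choose k : ℕ) : ℝ) = ((k + m)! : ℝ) / ((k ! : ℝ) * (m ! : ℝ)) := by
    have h := Nat.choose_mul_factorial_mul_factorial (show k ≤ k + m by omega)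
    rw [show k + m - k = m by omega] at h
    rw [eq_div_iff (mul_ne_zero hkf hmf)]
    calc (((k + m).choose k : ℕ) : ℝ) * ((k ! : ℝ) * (m ! : ℝ))
        = (((k + m).choose k * k ! * m ! : ℕ) : ℝ) := by push_cast; ring
      _ = _ := by rw [h]
  have hch2 : (((k + n).choose k : ℕ) : ℝ) = ((k + n)! : ℝ) / ((k ! : ℝ) * (n ! : ℝ)) := by
    have h := Nat.choose_mul_factorial_mul_factorial (show k ≤ k + n by omega)
    rw [show k + n - k = n by omega] at h
    rw [eq_div_iff (mul_ne_zero hkf hnf)]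
    calc (((k + n).choose k : ℕ) : ℝ) * ((k ! : ℝ) * (n ! : ℝ))
        = (((k + n).choose k * k ! * n ! : ℕ) : ℝ) := by push_cast; ring
      _ = _ := by rw [h]
  have hch3 : ((m.choose k : ℕ) : ℝ) = (m ! : ℝ) / ((k ! : ℝ) * (((m - k)! : ℕ) : ℝ)) := by
    have h := Nat.choose_mul_factorial_mul_factorial (hkn.trans hmn)
    rw [eq_div_iff (mul_ne_zero hkf hCm)]
    calc ((m.choose k : ℕ) : ℝ) * ((k ! : ℝ) * (((m - k)! : ℕ) : ℝ))
        = ((m.choose k * k ! * (m - k)! : ℕ) : ℝ) := by push_cast; ring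
      _ = _ := by rw [h]
  have hch4 : ((n.choose k : ℕ) : ℝ) = (n ! : ℝ) / ((k ! : ℝ) * (((n - k)! : ℕ) : ℝ)) := by
    have h := Nat.choose_mul_factorial_mul_factorial hkn
    rw [eq_div_iff (mul_ne_zero hkf hCn)]
    calc ((n.choose k : ℕ) : ℝ) * ((k ! : ℝ) * (((n - k)! : ℕ) : ℝ))
        = ((n.choose k * k ! * (n - k)! : ℕ) : ℝ) := by push_cast; ring
      _ = _ := by rw [h]
  rw [hch1, hch2, hch3, hch4]
  simp only [harm_cast]
  rw [sum_split k m, sum_split k n]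
  rcases Nat.even_or_odd k with hpar | hpar
  · rw [hpar.neg_one_pow]
    field_simp
    ring
  · rw [hpar.neg_one_pow]
    field_simp
    ring
end
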